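/- arXiv:2008.13232 — 7 statements merged into one kernel-verified Lean document; each statement's English description precedes it below -/
import Mathlib

section
/- Let α = (α₁,…,α_s) be a composition with s odd. Then the rank generating function satisfies r(q;α) = r(q; α₁,…,α_{s−1}, α_s − 1) + q^{α_s+1} · r(q; α₁,…,α_{s−2}, α_{s−1} − 1), where by convention F(α₁,…,α_{s−1},0) = F(α₁,…,α_{s−1}). -/
open Polynomial

/-- The order relation of the fence poset `F(α)` on positions `0,…,α.sum`
(position `p` corresponds to the element `x_{p+1}`).  Segment `j` (0-indexed)
occupies positions `(α.take j).sum` through `(α.take (j+1)).sum`; even-indexed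
segments are ascending and odd-indexed segments are descending. -/
def fenceLe (α : List ℕ) (p q : ℕ) : Prop :=
  p = q ∨ ∃ j < α.length,
    if j % 2 = 0 then
      (α.take j).sum ≤ p ∧ p ≤ q ∧ q ≤ (α.take (j + 1)).sum
    else
      (α.take j).sum ≤ q ∧ q ≤ p ∧ p ≤ (α.take (j + 1)).sum

/-- `I` is a lower order ideal of the fence `F(α)`. -/
def IsFenceIdeal (α : List ℕ) (I : Finset (Fin (α.sum + 1))) : Prop :=
  ∀ p q : Fin (α.sum + 1), fenceLe α p q → q ∈ I → p ∈ I

/-- The number of lower order ideals of `F(α)` of cardinality `k`,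
i.e. the size of the `k`-th rank of the distributive lattice `L(α)`. -/
noncomputable def fenceRk (α : List ℕ) (k : ℕ) : ℕ :=
  Nat.card {I : Finset (Fin (α.sum + 1)) // IsFenceIdeal α I ∧ I.card = k}

/-- The rank generating function `r(q;α)` of `L(α)`. -/
noncomputable def rpoly (α : List ℕ) : Polynomial ℕ :=
  ∑ k ∈ Finset.range (α.sum + 2), Polynomial.C (fenceRk α k) * Polynomial.X ^ k

/-- Deletion of a trailing `0` part: the convention `F(α₁,…,α_{s-1},0) = F(α₁,…,α_{s-1})`. -/
def normComp (l : List ℕ) : List ℕ :=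
  if l.getLast? = some 0 then l.dropLast else l

-- helpers
lemma sum_take_le (l : List ℕ) (j : ℕ) : (l.take j).sum ≤ l.sum := by
  conv_rhs => rw [← List.take_append_drop j l]
  rw [List.sum_append]; exact Nat.le_add_right _ _

lemma sum_take_mono (l : List ℕ) {j k : ℕ} (h : j ≤ k) :
    (l.take j).sum ≤ (l.take k).sum := by
  conv_rhs => rw [show l.take k = (l.take k).take j ++ (l.take k).drop j from
    (List.take_append_drop _ _).symm]
  rw [List.sum_append, List.take_take, min_eq_left h]
  exact Nat.le_add_right _ _

lemma fenceRk_eq_zero (l : List ℕ) {m : ℕ} (hm : l.sum + 1 < m) : fenceRk l m = 0 := by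
  rw [fenceRk, Nat.card_eq_zero]
  left
  constructor
  rintro ⟨I, -, hcard⟩
  have := Finset.card_le_univ I
  simp [Fintype.card_fin] at this
  omega

lemma coeff_rpoly (l : List ℕ) (m : ℕ) : (rpoly l).coeff m = fenceRk l m := by
  rw [rpoly, Polynomial.finset_sum_coeff]
  simp only [Polynomial.coeff_C_mul, Polynomial.coeff_X_pow, mul_ite, mul_one, mul_zero]
  rw [Finset.sum_ite_eq (Finset.range (l.sum + 2)) m (fun k => fenceRk l k)]
  simp only [Finset.mem_range]
  split
  · rfl
  · next h => exact (fenceRk_eq_zero l (by omega)).symm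

lemma count_top_not_mem (l₁ l₂ : List ℕ) (hs : l₁.sum = l₂.sum + 1)
    (H1 : ∀ p q : ℕ, p ≤ l₂.sum → q ≤ l₂.sum → (fenceLe l₁ p q ↔ fenceLe l₂ p q))
    (H2 : ∀ p q : ℕ, q ≤ l₂.sum → fenceLe l₁ p q → p ≤ l₂.sum) (m : ℕ) :
    Nat.card {I : Finset (Fin (l₁.sum + 1)) //
      (IsFenceIdeal l₁ I ∧ I.card = m) ∧ (⟨l₁.sum, Nat.lt_succ_self _⟩ : Fin (l₁.sum + 1)) ∉ I}
      = fenceRk l₂ m := by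
  rw [fenceRk]
  apply Nat.card_congr
  set N := l₁.sum with hN
  set t := l₂.sum with ht
  have het : ∀ x : ℕ, x < t + 1 → x < N + 1 := by omega
  let e : Fin (t + 1) ↪ Fin (N + 1) :=
    ⟨fun x => ⟨x.1, het x.1 x.2⟩, fun x y h => Fin.ext (by simpa using congrArg Fin.val h)⟩
  have he_val : ∀ x : Fin (t + 1), (e x).1 = x.1 := fun _ => rfl
  have he2 : ∀ (y : Fin (N + 1)) (h : y.1 < t + 1), e ⟨y.1, h⟩ = y := fun y h => Fin.ext rfl
  have hmem : ∀ (I : Finset (Fin (N + 1))),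
      (⟨N, Nat.lt_succ_self _⟩ : Fin (N + 1)) ∉ I → ∀ x ∈ I, x.1 ≤ t := by
    intro I hItop x hx
    by_contra hxt
    have hx1 : x.1 = N := by omega
    exact hItop ((Fin.ext hx1 : x = ⟨N, Nat.lt_succ_self _⟩) ▸ hx)
  have hmap : ∀ (I : Finset (Fin (N + 1))),
      (⟨N, Nat.lt_succ_self _⟩ : Fin (N + 1)) ∉ I →
      (Finset.univ.filter (fun x : Fin (t + 1) => e x ∈ I)).map e = I := by
    intro I hItop
    ext y
    simp only [Finset.mem_map, Finset.mem_filter, Finset.mem_univ, true_and]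
    constructor
    · rintro ⟨x, hx, rfl⟩; exact hx
    · intro hy
      have hyt : y.1 < t + 1 := by have := hmem I hItop y hy; omega
      exact ⟨⟨y.1, hyt⟩, by rwa [he2 y hyt], he2 y hyt⟩
  refine
    { toFun := fun I =>
        ⟨Finset.univ.filter (fun x : Fin (t + 1) => e x ∈ I.1), ?_, ?_⟩
      invFun := fun J => ⟨J.1.map e, ⟨?_, ?_⟩, ?_⟩
      left_inv := ?_
      right_inv := ?_ }
  · -- ideal property of the filtered set
    obtain ⟨I, ⟨hI, hIc⟩, hItop⟩ := I
    intro p q hle hq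
    simp only [Finset.mem_filter, Finset.mem_univ, true_and] at hq ⊢
    exact hI (e p) (e q) ((H1 p.1 q.1 (by omega) (by omega)).2 hle) hq
  · -- cardinality of the filtered set
    obtain ⟨I, ⟨hI, hIc⟩, hItop⟩ := I
    have := congrArg Finset.card (hmap I hItop)
    rw [Finset.card_map] at this
    exact this.trans hIc
  · -- ideal property of the mapped set
    obtain ⟨J, hJ, hJc⟩ := J
    intro p q hle hq
    simp only [Finset.mem_map] at hq ⊢
    obtain ⟨y, hy, rfl⟩ := hq
    have hyv : (e y).1 = y.1 := he_val y
    have hpt : p.1 ≤ t := H2 p.1 (e y).1 (by omega) hle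
    refine ⟨⟨p.1, by omega⟩, ?_, he2 p (by omega)⟩
    refine hJ ⟨p.1, by omega⟩ y ?_ hy
    exact (H1 p.1 y.1 (by omega) (by omega)).1 (by rwa [hyv] at hle)
  · -- card of mapped set
    obtain ⟨J, hJ, hJc⟩ := J
    simpa [Finset.card_map] using hJc
  · -- top not in mapped set
    obtain ⟨J, hJ, hJc⟩ := J
    intro hc
    simp only [Finset.mem_map] at hc
    obtain ⟨y, hy, hey⟩ := hc
    have h1 : (e y).1 = N := congrArg Fin.val hey
    have h2 : (e y).1 = y.1 := he_val y
    have := y.2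
    omega
  · -- left inverse : invFun (toFun I) = I
    rintro ⟨I, hI⟩
    apply Subtype.ext
    exact hmap I hI.2
  · -- right inverse : toFun (invFun J) = J
    rintro ⟨J, hJ⟩
    apply Subtype.ext
    simp only []
    ext x
    simp [Finset.mem_map']

section CountTopMem

variable (l₁ l₂ : List ℕ) (c : ℕ)

lemma block_card (hc : 0 < c) (hs : l₁.sum = l₂.sum + c) :
    (Finset.univ.filter (fun x : Fin (l₁.sum + 1) => l₂.sum + 1 ≤ x.1)).card = c := by
  have hlt : l₂.sum + 1 < l₁.sum + 1 := by omega
  have : (Finset.univ.filter (fun x : Fin (l₁.sum + 1) => l₂.sum + 1 ≤ x.1)) =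
      Finset.Ici (⟨l₂.sum + 1, hlt⟩ : Fin (l₁.sum + 1)) := by
    ext x
    simp [Fin.le_def]
  rw [this, Fin.card_Ici]
  simp only [Fin.val_mk]
  omega

lemma block_subset (hc : 0 < c) (hs : l₁.sum = l₂.sum + c)
    (H2 : ∀ p : ℕ, l₂.sum + 1 ≤ p → p ≤ l₁.sum → fenceLe l₁ p l₁.sum)
    (I : Finset (Fin (l₁.sum + 1))) (hI : IsFenceIdeal l₁ I)
    (htop : (⟨l₁.sum, Nat.lt_succ_self _⟩ : Fin (l₁.sum + 1)) ∈ I) :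
    ∀ x : Fin (l₁.sum + 1), l₂.sum + 1 ≤ x.1 → x ∈ I := by
  intro x hx
  refine hI x ⟨l₁.sum, Nat.lt_succ_self _⟩ ?_ htop
  exact H2 x.1 hx (by omega)

lemma count_top_mem_small (hc : 0 < c) (hs : l₁.sum = l₂.sum + c)
    (H2 : ∀ p : ℕ, l₂.sum + 1 ≤ p → p ≤ l₁.sum → fenceLe l₁ p l₁.sum)
    (m : ℕ) (hm : m < c) :
    Nat.card {I : Finset (Fin (l₁.sum + 1)) //
      (IsFenceIdeal l₁ I ∧ I.card = m) ∧ (⟨l₁.sum, Nat.lt_succ_self _⟩ : Fin (l₁.sum + 1)) ∈ I}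
      = 0 := by
  rw [Nat.card_eq_zero]
  left
  constructor
  rintro ⟨I, ⟨hI, hIc⟩, htop⟩
  have hsub : (Finset.univ.filter (fun x : Fin (l₁.sum + 1) => l₂.sum + 1 ≤ x.1)) ⊆ I := by
    intro x hx
    simp only [Finset.mem_filter, Finset.mem_univ, true_and] at hx
    exact block_subset l₁ l₂ c hc hs H2 I hI htop x hx
  have := Finset.card_le_card hsub
  rw [block_card l₁ l₂ c hc hs] at this
  omega

lemma count_top_mem (hc : 0 < c) (hs : l₁.sum = l₂.sum + c)
    (H1 : ∀ p q : ℕ, p ≤ l₂.sum → q ≤ l₂.sum → (fenceLe l₁ p q ↔ fenceLe l₂ p q))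
    (H2 : ∀ p : ℕ, l₂.sum + 1 ≤ p → p ≤ l₁.sum → fenceLe l₁ p l₁.sum)
    (H3 : ∀ p q : ℕ, q ≤ l₂.sum → fenceLe l₁ p q → p ≤ l₂.sum + 1)
    (H4 : ∀ p q : ℕ, l₂.sum + 1 ≤ q → fenceLe l₁ p q → l₂.sum + 1 ≤ p) (m : ℕ) :
    Nat.card {I : Finset (Fin (l₁.sum + 1)) //
      (IsFenceIdeal l₁ I ∧ I.card = m + c) ∧
        (⟨l₁.sum, Nat.lt_succ_self _⟩ : Fin (l₁.sum + 1)) ∈ I}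
      = fenceRk l₂ m := by
  rw [fenceRk]
  apply Nat.card_congr
  set N := l₁.sum with hN
  set t := l₂.sum with ht
  have het : ∀ x : ℕ, x < t + 1 → x < N + 1 := by omega
  let e : Fin (t + 1) ↪ Fin (N + 1) :=
    ⟨fun x => ⟨x.1, het x.1 x.2⟩, fun x y h => Fin.ext (by simpa using congrArg Fin.val h)⟩
  have he_val : ∀ x : Fin (t + 1), (e x).1 = x.1 := fun _ => rfl
  have he2 : ∀ (y : Fin (N + 1)) (h : y.1 < t + 1), e ⟨y.1, h⟩ = y := fun y h => Fin.ext rfl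
  set B : Finset (Fin (N + 1)) := Finset.univ.filter (fun x : Fin (N + 1) => t + 1 ≤ x.1)
    with hB
  have hmemB : ∀ x : Fin (N + 1), x ∈ B ↔ t + 1 ≤ x.1 := by
    intro x; simp [hB]
  have hBcard : B.card = c := block_card l₁ l₂ c hc hs
  have hdisj : ∀ J : Finset (Fin (t + 1)), Disjoint (J.map e) B := by
    intro J
    rw [Finset.disjoint_left]
    intro x hx hxB
    simp only [Finset.mem_map] at hx
    obtain ⟨y, hy, rfl⟩ := hx
    rw [hmemB] at hxB
    have := he_val y
    have := y.2
    omega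
  have hunion : ∀ I : Finset (Fin (N + 1)), IsFenceIdeal l₁ I →
      (⟨N, Nat.lt_succ_self _⟩ : Fin (N + 1)) ∈ I →
      (Finset.univ.filter (fun x : Fin (t + 1) => e x ∈ I)).map e ∪ B = I := by
    intro I hI htop
    ext y
    simp only [Finset.mem_union, Finset.mem_map, Finset.mem_filter, Finset.mem_univ, true_and,
      hmemB]
    constructor
    · rintro (⟨x, hx, rfl⟩ | hyB)
      · exact hx
      · exact block_subset l₁ l₂ c hc hs H2 I hI htop y hyB
    · intro hy
      rcases Nat.lt_or_ge y.1 (t + 1) with hyt | hyt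
      · exact Or.inl ⟨⟨y.1, hyt⟩, by rwa [he2 y hyt], he2 y hyt⟩
      · exact Or.inr hyt
  refine
    { toFun := fun I =>
        ⟨Finset.univ.filter (fun x : Fin (t + 1) => e x ∈ I.1), ?_, ?_⟩
      invFun := fun J => ⟨J.1.map e ∪ B, ⟨?_, ?_⟩, ?_⟩
      left_inv := ?_
      right_inv := ?_ }
  · -- ideal property of the filtered set
    obtain ⟨I, ⟨hI, hIc⟩, htop⟩ := I
    intro p q hle hq
    simp only [Finset.mem_filter, Finset.mem_univ, true_and] at hq ⊢
    exact hI (e p) (e q) ((H1 p.1 q.1 (by omega) (by omega)).2 hle) hq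
  · -- cardinality of the filtered set
    obtain ⟨I, ⟨hI, hIc⟩, htop⟩ := I
    have h1 := congrArg Finset.card (hunion I hI htop)
    rw [Finset.card_union_of_disjoint (hdisj _), Finset.card_map, hBcard] at h1
    simp only []
    exact Nat.add_right_cancel (h1.trans hIc)
  · -- ideal property of the union set
    obtain ⟨J, hJ, hJc⟩ := J
    intro p q hle hq
    simp only [Finset.mem_union, Finset.mem_map, hmemB] at hq ⊢
    rcases hq with ⟨y, hy, rfl⟩ | hqB
    · have hyv : (e y).1 = y.1 := he_val y
      have hy2 := y.2
      have hpt : p.1 ≤ t + 1 := H3 p.1 (e y).1 (by omega) hle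
      rcases Nat.lt_or_ge p.1 (t + 1) with hp | hp
      · refine Or.inl ⟨⟨p.1, hp⟩, ?_, he2 p hp⟩
        refine hJ ⟨p.1, hp⟩ y ?_ hy
        exact (H1 p.1 y.1 (by omega) (by omega)).1 (by rwa [hyv] at hle)
      · exact Or.inr hp
    · exact Or.inr (H4 p.1 q.1 hqB hle)
  · -- card of the union set
    obtain ⟨J, hJ, hJc⟩ := J
    rw [Finset.card_union_of_disjoint (hdisj _), Finset.card_map, hBcard, hJc]
  · -- top mem
    obtain ⟨J, hJ, hJc⟩ := J
    simp only [Finset.mem_union, hmemB]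
    exact Or.inr (show t + 1 ≤ N by omega)
  · -- left inverse
    rintro ⟨I, ⟨hI, hIc⟩, htop⟩
    apply Subtype.ext
    exact hunion I hI htop
  · -- right inverse
    rintro ⟨J, hJ⟩
    apply Subtype.ext
    simp only []
    ext x
    simp only [Finset.mem_filter, Finset.mem_univ, true_and, Finset.mem_union, Finset.mem_map',
      hmemB]
    have := x.2
    have : ¬ (t + 1 ≤ (e x).1) := by rw [he_val]; omega
    tauto

end CountTopMem

-- take-sum computations
lemma sum_take_append (γ L : List ℕ) (j : ℕ) :
    ((γ ++ L).take j).sum = (γ.take j).sum + (L.take (j - γ.length)).sum := by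
  rw [List.take_append, List.sum_append]

lemma sum_take_append_low (γ L : List ℕ) {j : ℕ} (h : j ≤ γ.length) :
    ((γ ++ L).take j).sum = (γ.take j).sum := by
  rw [sum_take_append, Nat.sub_eq_zero_of_le h]
  simp

lemma sum_take_pair_mid (γ : List ℕ) (x y : ℕ) {j : ℕ} (hj : j = γ.length + 1) :
    ((γ ++ [x, y]).take j).sum = γ.sum + x := by
  subst hj
  rw [sum_take_append, List.take_of_length_le (by omega)]
  simp

lemma sum_take_pair_high (γ : List ℕ) (x y : ℕ) {j : ℕ} (h : γ.length + 2 ≤ j) :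
    ((γ ++ [x, y]).take j).sum = γ.sum + x + y := by
  rw [sum_take_append, List.take_of_length_le (by omega),
    List.take_of_length_le (by simp; omega)]
  simp [Nat.add_assoc]

lemma sum_take_single_high (γ : List ℕ) (x : ℕ) {j : ℕ} (h : γ.length + 1 ≤ j) :
    ((γ ++ [x]).take j).sum = γ.sum + x := by
  rw [sum_take_append, List.take_of_length_le (by omega),
    List.take_of_length_le (by simp; omega)]
  simp

lemma normComp_concat (l : List ℕ) (x : ℕ) :
    normComp (l ++ [x]) = if x = 0 then l else l ++ [x] := by
  rw [normComp, List.getLast?_concat]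
  by_cases h : x = 0 <;> simp [h, List.dropLast_concat]

lemma restrict_iff₁ (γ : List ℕ) (b a : ℕ) (ha : 0 < a) (hn : γ.length % 2 = 1)
    (p q : ℕ) (hq : q + 1 ≤ γ.sum + b + a) :
    fenceLe (γ ++ [b, a]) p q ↔ fenceLe (normComp (γ ++ [b, a - 1])) p q := by
  have hnorm : normComp (γ ++ [b, a - 1]) = if a = 1 then γ ++ [b] else γ ++ [b, a - 1] := by
    rw [show γ ++ [b, a - 1] = (γ ++ [b]) ++ [a - 1] by simp, normComp_concat]
    by_cases h1 : a = 1
    · rw [if_pos (by omega), if_pos h1]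
    · rw [if_neg (by omega), if_neg h1]
  set n := γ.length with hn'
  set g := γ.sum with hg'
  by_cases h1 : a = 1
  · -- l₂ = γ ++ [b]
    rw [hnorm, if_pos h1]
    simp only [fenceLe]
    constructor
    · rintro (rfl | ⟨j, hj, hcl⟩)
      · exact Or.inl rfl
      have hjlen : j < n + 2 := by rw [List.length_append] at hj; simpa using hj
      rcases Nat.lt_or_ge j n with hjn | hjn
      · refine Or.inr ⟨j, by simp only [List.length_append, List.length_cons, List.length_nil]; omega, ?_⟩
        rw [sum_take_append_low γ [b] (show j ≤ γ.length by omega),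
          sum_take_append_low γ [b] (show j + 1 ≤ γ.length by omega)]
        rwa [sum_take_append_low γ [b, a] (show j ≤ γ.length by omega),
          sum_take_append_low γ [b, a] (show j + 1 ≤ γ.length by omega)] at hcl
      rcases Nat.lt_or_ge j (n + 1) with hjn1 | hjn1
      · -- j = n
        rw [if_neg (by omega)] at hcl
        rw [sum_take_append_low γ [b, a] (show j ≤ γ.length by omega),
          sum_take_pair_mid γ b a (by omega)] at hcl
        refine Or.inr ⟨j, by simp only [List.length_append, List.length_cons, List.length_nil]; omega, ?_⟩
        rw [if_neg (by omega), sum_take_append_low γ [b] (show j ≤ γ.length by omega),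
          sum_take_single_high γ b (show γ.length + 1 ≤ j + 1 by omega)]
        exact hcl
      · -- j = n + 1 : forces p = q
        rw [if_pos (by omega)] at hcl
        rw [sum_take_pair_mid γ b a (by omega),
          sum_take_pair_high γ b a (show γ.length + 2 ≤ j + 1 by omega)] at hcl
        exact Or.inl (by omega)
    · rintro (rfl | ⟨j, hj, hcl⟩)
      · exact Or.inl rfl
      have hjlen : j < n + 1 := by rw [List.length_append] at hj; simpa using hj
      refine Or.inr ⟨j, by simp only [List.length_append, List.length_cons, List.length_nil]; omega, ?_⟩
      rcases Nat.lt_or_ge j n with hjn | hjn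
      · rw [sum_take_append_low γ [b, a] (show j ≤ γ.length by omega),
          sum_take_append_low γ [b, a] (show j + 1 ≤ γ.length by omega)]
        rwa [sum_take_append_low γ [b] (show j ≤ γ.length by omega),
          sum_take_append_low γ [b] (show j + 1 ≤ γ.length by omega)] at hcl
      · -- j = n
        rw [if_neg (by omega)] at hcl ⊢
        rw [sum_take_append_low γ [b] (show j ≤ γ.length by omega),
          sum_take_single_high γ b (show γ.length + 1 ≤ j + 1 by omega)] at hcl
        rw [sum_take_append_low γ [b, a] (show j ≤ γ.length by omega),
          sum_take_pair_mid γ b a (by omega)]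
        exact hcl
  · -- l₂ = γ ++ [b, a - 1]
    rw [hnorm, if_neg h1]
    simp only [fenceLe]
    constructor
    · rintro (rfl | ⟨j, hj, hcl⟩)
      · exact Or.inl rfl
      have hjlen : j < n + 2 := by rw [List.length_append] at hj; simpa using hj
      refine Or.inr ⟨j, by simp only [List.length_append, List.length_cons, List.length_nil]; omega, ?_⟩
      rcases Nat.lt_or_ge j n with hjn | hjn
      · rw [sum_take_append_low γ [b, a - 1] (show j ≤ γ.length by omega),
          sum_take_append_low γ [b, a - 1] (show j + 1 ≤ γ.length by omega)]
        rwa [sum_take_append_low γ [b, a] (show j ≤ γ.length by omega),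
          sum_take_append_low γ [b, a] (show j + 1 ≤ γ.length by omega)] at hcl
      rcases Nat.lt_or_ge j (n + 1) with hjn1 | hjn1
      · rw [if_neg (by omega)] at hcl ⊢
        rw [sum_take_append_low γ [b, a] (show j ≤ γ.length by omega),
          sum_take_pair_mid γ b a (by omega)] at hcl
        rw [sum_take_append_low γ [b, a - 1] (show j ≤ γ.length by omega),
          sum_take_pair_mid γ b (a - 1) (by omega)]
        exact hcl
      · rw [if_pos (by omega)] at hcl ⊢
        rw [sum_take_pair_mid γ b a (by omega),
          sum_take_pair_high γ b a (show γ.length + 2 ≤ j + 1 by omega)] at hcl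
        rw [sum_take_pair_mid γ b (a - 1) (by omega),
          sum_take_pair_high γ b (a - 1) (show γ.length + 2 ≤ j + 1 by omega)]
        omega
    · rintro (rfl | ⟨j, hj, hcl⟩)
      · exact Or.inl rfl
      have hjlen : j < n + 2 := by rw [List.length_append] at hj; simpa using hj
      refine Or.inr ⟨j, by simp only [List.length_append, List.length_cons, List.length_nil]; omega, ?_⟩
      rcases Nat.lt_or_ge j n with hjn | hjn
      · rw [sum_take_append_low γ [b, a] (show j ≤ γ.length by omega),
          sum_take_append_low γ [b, a] (show j + 1 ≤ γ.length by omega)]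
        rwa [sum_take_append_low γ [b, a - 1] (show j ≤ γ.length by omega),
          sum_take_append_low γ [b, a - 1] (show j + 1 ≤ γ.length by omega)] at hcl
      rcases Nat.lt_or_ge j (n + 1) with hjn1 | hjn1
      · rw [if_neg (by omega)] at hcl ⊢
        rw [sum_take_append_low γ [b, a - 1] (show j ≤ γ.length by omega),
          sum_take_pair_mid γ b (a - 1) (by omega)] at hcl
        rw [sum_take_append_low γ [b, a] (show j ≤ γ.length by omega),
          sum_take_pair_mid γ b a (by omega)]
        exact hcl
      · rw [if_pos (by omega)] at hcl ⊢
        rw [sum_take_pair_mid γ b (a - 1) (by omega),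
          sum_take_pair_high γ b (a - 1) (show γ.length + 2 ≤ j + 1 by omega)] at hcl
        rw [sum_take_pair_mid γ b a (by omega),
          sum_take_pair_high γ b a (show γ.length + 2 ≤ j + 1 by omega)]
        omega

lemma restrict_iff₂ (γ : List ℕ) (b a : ℕ) (hb : 0 < b) (hn : γ.length % 2 = 1)
    (p q : ℕ) (hp : p + 1 ≤ γ.sum + b) (hq : q + 1 ≤ γ.sum + b) :
    fenceLe (γ ++ [b, a]) p q ↔ fenceLe (normComp (γ ++ [b - 1])) p q := by
  have hnorm : normComp (γ ++ [b - 1]) = if b = 1 then γ else γ ++ [b - 1] := by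
    rw [normComp_concat]
    by_cases h1 : b = 1
    · rw [if_pos (by omega), if_pos h1]
    · rw [if_neg (by omega), if_neg h1]
  set n := γ.length with hn'
  set g := γ.sum with hg'
  by_cases h1 : b = 1
  · -- l₂ = γ
    rw [hnorm, if_pos h1]
    simp only [fenceLe]
    constructor
    · rintro (rfl | ⟨j, hj, hcl⟩)
      · exact Or.inl rfl
      have hjlen : j < n + 2 := by rw [List.length_append] at hj; simpa using hj
      rcases Nat.lt_or_ge j n with hjn | hjn
      · refine Or.inr ⟨j, by omega, ?_⟩
        rwa [sum_take_append_low γ [b, a] (show j ≤ γ.length by omega),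
          sum_take_append_low γ [b, a] (show j + 1 ≤ γ.length by omega)] at hcl
      rcases Nat.lt_or_ge j (n + 1) with hjn1 | hjn1
      · -- j = n : forces p = q
        rw [if_neg (by omega)] at hcl
        rw [sum_take_append_low γ [b, a] (show j ≤ γ.length by omega),
          sum_take_pair_mid γ b a (by omega)] at hcl
        have htk : (γ.take j).sum = g := by rw [List.take_of_length_le (by omega)]
        exact Or.inl (by omega)
      · -- j = n + 1 : contradiction with hp
        rw [if_pos (by omega)] at hcl
        rw [sum_take_pair_mid γ b a (by omega)] at hcl
        exact Or.inl (by omega)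
    · rintro (rfl | ⟨j, hj, hcl⟩)
      · exact Or.inl rfl
      refine Or.inr ⟨j, by simp only [List.length_append, List.length_cons, List.length_nil]; omega, ?_⟩
      rw [sum_take_append_low γ [b, a] (show j ≤ γ.length by omega),
        sum_take_append_low γ [b, a] (show j + 1 ≤ γ.length by omega)]
      exact hcl
  · -- l₂ = γ ++ [b - 1]
    rw [hnorm, if_neg h1]
    simp only [fenceLe]
    constructor
    · rintro (rfl | ⟨j, hj, hcl⟩)
      · exact Or.inl rfl
      have hjlen : j < n + 2 := by rw [List.length_append] at hj; simpa using hj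
      rcases Nat.lt_or_ge j n with hjn | hjn
      · refine Or.inr ⟨j, by simp only [List.length_append, List.length_cons, List.length_nil]; omega, ?_⟩
        rw [sum_take_append_low γ [b - 1] (show j ≤ γ.length by omega),
          sum_take_append_low γ [b - 1] (show j + 1 ≤ γ.length by omega)]
        rwa [sum_take_append_low γ [b, a] (show j ≤ γ.length by omega),
          sum_take_append_low γ [b, a] (show j + 1 ≤ γ.length by omega)] at hcl
      rcases Nat.lt_or_ge j (n + 1) with hjn1 | hjn1
      · -- j = n
        rw [if_neg (by omega)] at hcl
        rw [sum_take_append_low γ [b, a] (show j ≤ γ.length by omega),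
          sum_take_pair_mid γ b a (by omega)] at hcl
        refine Or.inr ⟨j, by simp only [List.length_append, List.length_cons, List.length_nil]; omega, ?_⟩
        rw [if_neg (by omega), sum_take_append_low γ [b - 1] (show j ≤ γ.length by omega),
          sum_take_single_high γ (b - 1) (show γ.length + 1 ≤ j + 1 by omega)]
        omega
      · -- j = n + 1 : contradiction with hp
        rw [if_pos (by omega)] at hcl
        rw [sum_take_pair_mid γ b a (by omega)] at hcl
        exact Or.inl (by omega)
    · rintro (rfl | ⟨j, hj, hcl⟩)
      · exact Or.inl rfl
      have hjlen : j < n + 1 := by rw [List.length_append] at hj; simpa using hj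
      refine Or.inr ⟨j, by simp only [List.length_append, List.length_cons, List.length_nil]; omega, ?_⟩
      rcases Nat.lt_or_ge j n with hjn | hjn
      · rw [sum_take_append_low γ [b, a] (show j ≤ γ.length by omega),
          sum_take_append_low γ [b, a] (show j + 1 ≤ γ.length by omega)]
        rwa [sum_take_append_low γ [b - 1] (show j ≤ γ.length by omega),
          sum_take_append_low γ [b - 1] (show j + 1 ≤ γ.length by omega)] at hcl
      · -- j = n
        rw [if_neg (by omega)] at hcl ⊢
        rw [sum_take_append_low γ [b - 1] (show j ≤ γ.length by omega),
          sum_take_single_high γ (b - 1) (show γ.length + 1 ≤ j + 1 by omega)] at hcl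
        rw [sum_take_append_low γ [b, a] (show j ≤ γ.length by omega),
          sum_take_pair_mid γ b a (by omega)]
        omega

lemma below_top (γ : List ℕ) (b a : ℕ) (hn : γ.length % 2 = 1)
    (p : ℕ) (hp1 : γ.sum + b ≤ p) (hp2 : p ≤ γ.sum + b + a) :
    fenceLe (γ ++ [b, a]) p (γ.sum + b + a) := by
  refine Or.inr ⟨γ.length + 1, by simp only [List.length_append, List.length_cons, List.length_nil]; omega, ?_⟩
  rw [if_pos (by omega), sum_take_pair_mid γ b a (by omega),
    sum_take_pair_high γ b a (by omega)]
  omega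

lemma bound_top₁ (γ : List ℕ) (b a : ℕ) (ha : 0 < a) (hn : γ.length % 2 = 1)
    (p q : ℕ) (hq : q + 1 ≤ γ.sum + b + a) (hle : fenceLe (γ ++ [b, a]) p q) :
    p + 1 ≤ γ.sum + b + a := by
  rcases hle with rfl | ⟨j, hj, hcl⟩
  · omega
  have hjlen : j < γ.length + 2 := by rw [List.length_append] at hj; simpa using hj
  rcases Nat.mod_two_eq_zero_or_one j with h2 | h2
  · rw [if_pos h2] at hcl
    omega
  · rw [if_neg (by omega)] at hcl
    have hjn : j + 1 ≤ γ.length + 1 := by omega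
    have h3 := sum_take_mono (γ ++ [b, a]) hjn
    rw [sum_take_pair_mid γ b a rfl] at h3
    omega

lemma bound_low₂ (γ : List ℕ) (b a : ℕ) (hn : γ.length % 2 = 1)
    (p q : ℕ) (hq : q + 1 ≤ γ.sum + b) (hle : fenceLe (γ ++ [b, a]) p q) :
    p ≤ γ.sum + b := by
  rcases hle with rfl | ⟨j, hj, hcl⟩
  · omega
  have hjlen : j < γ.length + 2 := by rw [List.length_append] at hj; simpa using hj
  rcases Nat.mod_two_eq_zero_or_one j with h2 | h2
  · rw [if_pos h2] at hcl
    omega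
  · rw [if_neg (by omega)] at hcl
    have hjn : j + 1 ≤ γ.length + 1 := by omega
    have h3 := sum_take_mono (γ ++ [b, a]) hjn
    rw [sum_take_pair_mid γ b a rfl] at h3
    omega

lemma bound_high₂ (γ : List ℕ) (b a : ℕ) (hb : 0 < b) (hn : γ.length % 2 = 1)
    (p q : ℕ) (hq : γ.sum + b ≤ q) (hle : fenceLe (γ ++ [b, a]) p q) :
    γ.sum + b ≤ p := by
  rcases hle with rfl | ⟨j, hj, hcl⟩
  · omega
  have hjlen : j < γ.length + 2 := by rw [List.length_append] at hj; simpa using hj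
  rcases Nat.mod_two_eq_zero_or_one j with h2 | h2
  · rw [if_pos h2] at hcl
    rcases Nat.lt_or_ge j γ.length with hjn | hjn
    · -- j + 1 ≤ γ.length : upper bound on q is at most γ.sum, contradiction
      have h3 : ((γ ++ [b, a]).take (j + 1)).sum = (γ.take (j + 1)).sum :=
        sum_take_append_low γ [b, a] (by omega)
      have h4 := sum_take_le γ (j + 1)
      omega
    · -- j even and ≥ γ.length : j = γ.length + 1
      have hjn1 : j = γ.length + 1 := by omega
      rw [sum_take_pair_mid γ b a (by omega)] at hcl
      omega
  · rw [if_neg (by omega)] at hcl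
    omega

lemma card_split {α : Type*} [Finite α] (P Q : α → Prop) :
    Nat.card {x // P x} = Nat.card {x // P x ∧ Q x} + Nat.card {x // P x ∧ ¬ Q x} := by
  classical
  have h1 : Nat.card {x // P x} =
      Nat.card ({y : {x // P x} // Q y.1} ⊕ {y : {x // P x} // ¬ Q y.1}) :=
    (Nat.card_congr (Equiv.sumCompl (fun y : {x // P x} => Q y.1))).symm
  rw [h1, Nat.card_sum]
  congr 1
  · exact Nat.card_congr (Equiv.subtypeSubtypeEquivSubtypeInter P Q)
  · exact Nat.card_congr (Equiv.subtypeSubtypeEquivSubtypeInter P (fun x => ¬ Q x))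

/-- The recursion for the rank generating function when the number of segments is odd:
`r(q;α) = r(q;α₁,…,α_{s-1},α_s-1) + q^{α_s+1}·r(q;α₁,…,α_{s-2},α_{s-1}-1)`.
Here `α = γ ++ [b, a]`, so `b = α_{s-1}` and `a = α_s`. -/
theorem rpoly_rec_odd (γ : List ℕ) (b a : ℕ) (hγ : ∀ x ∈ γ, 0 < x)
    (hb : 0 < b) (ha : 0 < a) (hodd : Odd (γ ++ [b, a]).length) :
    rpoly (γ ++ [b, a]) =
      rpoly (normComp (γ ++ [b, a - 1])) +
        Polynomial.X ^ (a + 1) * rpoly (normComp (γ ++ [b - 1])) := by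
  classical
  have hn : γ.length % 2 = 1 := by
    rw [List.length_append] at hodd
    simp only [List.length_cons, List.length_nil] at hodd
    rcases hodd with ⟨k, hk⟩
    omega
  have hsum1 : (γ ++ [b, a]).sum = γ.sum + b + a := by
    rw [List.sum_append]; simp [Nat.add_assoc]
  have hsum2 : (normComp (γ ++ [b, a - 1])).sum = γ.sum + b + a - 1 := by
    rw [show γ ++ [b, a - 1] = (γ ++ [b]) ++ [a - 1] by simp, normComp_concat]
    by_cases h1 : a = 1
    · rw [if_pos (by omega), List.sum_append]
      simp
      omega
    · rw [if_neg (by omega), List.sum_append, List.sum_append]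
      simp
      omega
  have hsum3 : (normComp (γ ++ [b - 1])).sum = γ.sum + b - 1 := by
    rw [normComp_concat]
    by_cases h1 : b = 1
    · rw [if_pos (by omega)]
      omega
    · rw [if_neg (by omega), List.sum_append]
      simp
      omega
  apply Polynomial.ext
  intro m
  rw [Polynomial.coeff_add, coeff_rpoly, coeff_rpoly, mul_comm,
    Polynomial.coeff_mul_X_pow', coeff_rpoly]
  have hsplit := card_split
    (fun I : Finset (Fin ((γ ++ [b, a]).sum + 1)) => IsFenceIdeal (γ ++ [b, a]) I ∧ I.card = m)
    (fun I => (⟨(γ ++ [b, a]).sum, Nat.lt_succ_self _⟩ : Fin ((γ ++ [b, a]).sum + 1)) ∈ I)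
  rw [fenceRk, hsplit]
  have hnotmem : Nat.card {I : Finset (Fin ((γ ++ [b, a]).sum + 1)) //
      (IsFenceIdeal (γ ++ [b, a]) I ∧ I.card = m) ∧
        (⟨(γ ++ [b, a]).sum, Nat.lt_succ_self _⟩ : Fin ((γ ++ [b, a]).sum + 1)) ∉ I}
      = fenceRk (normComp (γ ++ [b, a - 1])) m := by
    apply count_top_not_mem
    · omega
    · intro p q hp hq
      exact restrict_iff₁ γ b a ha hn p q (by omega)
    · intro p q hq hle
      have := bound_top₁ γ b a ha hn p q (by omega) hle
      omega
  rw [hnotmem]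
  have hmem : Nat.card {I : Finset (Fin ((γ ++ [b, a]).sum + 1)) //
      (IsFenceIdeal (γ ++ [b, a]) I ∧ I.card = m) ∧
        (⟨(γ ++ [b, a]).sum, Nat.lt_succ_self _⟩ : Fin ((γ ++ [b, a]).sum + 1)) ∈ I}
      = if a + 1 ≤ m then fenceRk (normComp (γ ++ [b - 1])) (m - (a + 1)) else 0 := by
    split
    · next hm =>
      have key := count_top_mem (γ ++ [b, a]) (normComp (γ ++ [b - 1])) (a + 1)
        (by omega) (by omega) ?_ ?_ ?_ ?_ (m - (a + 1))
      · rwa [show (m - (a + 1)) + (a + 1) = m by omega] at key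
      · intro p q hp hq
        exact restrict_iff₂ γ b a hb hn p q (by omega) (by omega)
      · intro p h1 h2
        rw [hsum1]
        exact below_top γ b a hn p (by omega) (by omega)
      · intro p q hq hle
        have := bound_low₂ γ b a hn p q (by omega) hle
        omega
      · intro p q hq hle
        have := bound_high₂ γ b a hb hn p q (by omega) hle
        omega
    · next hm =>
      apply count_top_mem_small _ (normComp (γ ++ [b - 1])) (a + 1)
      · omega
      · omega
      · intro p h1 h2
        rw [hsum1]
        exact below_top γ b a hn p (by omega) (by omega)
      · omega
  rw [hmem]
  exact Nat.add_comm _ _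
end

section
/- If α = (α₁,…,α_s) is a composition with α_s ≥ α₁ + α₂ + ⋯ + α_{s−1}, then the rank generating function r(q;α) of the lattice of order ideals of the fence F(α) is unimodal. -/
open Polynomial

/-- A sequence of natural numbers (indexed by `ℕ`) is unimodal. -/
def SeqUnimodal (r : ℕ → ℕ) : Prop :=
  ∃ m : ℕ, ∀ i j : ℕ, i ≤ j → (j ≤ m → r i ≤ r j) ∧ (m ≤ i → r j ≤ r i)

namespace FenceAux

variable (β : List ℕ) (a : ℕ)

lemma len_app : (β ++ [a]).length = β.length + 1 := by simp

lemma sum_app : (β ++ [a]).sum = β.sum + a := by simp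

lemma take_app {j : ℕ} (hj : j ≤ β.length) : (β ++ [a]).take j = β.take j :=
  List.take_append_of_le_length hj

lemma take_app_all : (β ++ [a]).take (β.length + 1) = β ++ [a] :=
  List.take_of_length_le (by simp)

lemma sum_take_le (j : ℕ) : (β.take j).sum ≤ β.sum := by
  conv_rhs => rw [← List.take_append_drop j β]
  rw [List.sum_append]
  omega

lemma sum_take_lt (hβ : ∀ x ∈ β, 0 < x) {j : ℕ} (hj : j < β.length) :
    (β.take j).sum < β.sum := by
  conv_rhs => rw [← List.take_append_drop j β]
  rw [List.sum_append]
  have hd : β.drop j ≠ [] := by rw [Ne, List.drop_eq_nil_iff]; omega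
  have : 0 < (β.drop j).sum :=
    List.sum_pos _ (fun x hx => hβ x (List.mem_of_mem_drop hx)) hd
  omega

/-- Position (in `0,…,β.sum+a`) of the `i`-th lowest element of the last segment. -/
def efn (i : ℕ) : ℕ := if β.length % 2 = 0 then β.sum + i else β.sum + a - i

lemma efn_le {i : ℕ} (hi : i ≤ a) : efn β a i ≤ β.sum + a := by unfold efn; split <;> omega

lemma efn_inj {i j : ℕ} (hi : i ≤ a) (hj : j ≤ a) (h : efn β a i = efn β a j) : i = j := by
  unfold efn at h; split at h <;> omega

lemma exists_efn {x : ℕ} (h1 : β.sum ≤ x) (h2 : x ≤ β.sum + a) :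
    ∃ i, i ≤ a ∧ x = efn β a i := by
  unfold efn; split
  · exact ⟨x - β.sum, by omega, by omega⟩
  · exact ⟨β.sum + a - x, by omega, by omega⟩

lemma fenceLe_efn_mono {i j : ℕ} (hij : i ≤ j) (hj : j ≤ a) :
    fenceLe (β ++ [a]) (efn β a i) (efn β a j) := by
  right
  refine ⟨β.length, by simp, ?_⟩
  rw [take_app β a le_rfl, take_app_all, List.take_length]
  by_cases h2 : β.length % 2 = 0
  · rw [if_pos h2]
    simp only [efn, if_pos h2, List.sum_append, List.sum_cons, List.sum_nil]
    omega
  · rw [if_neg h2]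
    simp only [efn, if_neg h2, List.sum_append, List.sum_cons, List.sum_nil]
    omega

/-- Everything below `efn t` (for `t < a`) is of the form `efn i`, `i ≤ t`. -/
lemma fenceLe_to_efn (hβ : ∀ x ∈ β, 0 < x) {t p : ℕ} (ht : t < a)
    (h : fenceLe (β ++ [a]) p (efn β a t)) : ∃ i, i ≤ t ∧ p = efn β a i := by
  rcases h with h | ⟨j, hj, hcond⟩
  · exact ⟨t, le_rfl, h⟩
  rw [len_app] at hj
  by_cases hjtop : j = β.length
  · subst hjtop
    rw [take_app β a le_rfl, take_app_all, List.take_length] at hcond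
    by_cases h2 : β.length % 2 = 0
    · rw [if_pos h2] at hcond
      simp only [efn, if_pos h2, List.sum_append, List.sum_cons, List.sum_nil] at hcond ⊢
      exact ⟨p - β.sum, by omega, by omega⟩
    · rw [if_neg h2] at hcond
      simp only [efn, if_neg h2, List.sum_append, List.sum_cons, List.sum_nil] at hcond ⊢
      exact ⟨β.sum + a - p, by omega, by omega⟩
  · have hjlt : j < β.length := by omega
    rw [take_app β a (by omega), take_app β a (by omega)] at hcond
    have hA : (β.take (j+1)).sum ≤ β.sum := sum_take_le β (j+1)
    have hA' : (β.take j).sum ≤ β.sum := sum_take_le β j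
    have hB : (β.take (j+1)).sum < β.sum ∨ j + 1 = β.length := by
      by_cases hlt : j + 1 < β.length
      · exact Or.inl (sum_take_lt β hβ hlt)
      · exact Or.inr (by omega)
    by_cases hj2 : j % 2 = 0
    · rw [if_pos hj2] at hcond
      by_cases h2 : β.length % 2 = 0
      · simp only [efn, if_pos h2] at hcond ⊢
        rcases hB with hB | hB
        · exact ⟨p - β.sum, by omega, by omega⟩
        · exact ⟨p - β.sum, by omega, by omega⟩
      · simp only [efn, if_neg h2] at hcond ⊢
        exact ⟨β.sum + a - p, by omega, by omega⟩
    · rw [if_neg hj2] at hcond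
      by_cases h2 : β.length % 2 = 0
      · simp only [efn, if_pos h2] at hcond ⊢
        exact ⟨p - β.sum, by omega, by omega⟩
      · simp only [efn, if_neg h2] at hcond ⊢
        exact ⟨β.sum + a - p, by omega, by omega⟩

/-- Everything above `efn t` (for `1 ≤ t ≤ a`) is of the form `efn i`, `t ≤ i ≤ a`. -/
lemma efn_to_fenceLe (hβ : ∀ x ∈ β, 0 < x) {t q : ℕ} (ht1 : 1 ≤ t) (ht : t ≤ a)
    (hq : q ≤ β.sum + a) (h : fenceLe (β ++ [a]) (efn β a t) q) :
    ∃ i, t ≤ i ∧ i ≤ a ∧ q = efn β a i := by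
  rcases h with h | ⟨j, hj, hcond⟩
  · exact ⟨t, le_rfl, ht, h.symm⟩
  rw [len_app] at hj
  by_cases hjtop : j = β.length
  · subst hjtop
    rw [take_app β a le_rfl, take_app_all, List.take_length] at hcond
    by_cases h2 : β.length % 2 = 0
    · rw [if_pos h2] at hcond
      simp only [efn, if_pos h2, List.sum_append, List.sum_cons, List.sum_nil] at hcond ⊢
      exact ⟨q - β.sum, by omega, by omega, by omega⟩
    · rw [if_neg h2] at hcond
      simp only [efn, if_neg h2, List.sum_append, List.sum_cons, List.sum_nil] at hcond ⊢
      exact ⟨β.sum + a - q, by omega, by omega, by omega⟩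
  · have hjlt : j < β.length := by omega
    rw [take_app β a (by omega), take_app β a (by omega)] at hcond
    have hA : (β.take (j+1)).sum ≤ β.sum := sum_take_le β (j+1)
    have hA' : (β.take j).sum ≤ β.sum := sum_take_le β j
    have hB : (β.take (j+1)).sum < β.sum ∨ j + 1 = β.length := by
      by_cases hlt : j + 1 < β.length
      · exact Or.inl (sum_take_lt β hβ hlt)
      · exact Or.inr (by omega)
    by_cases hj2 : j % 2 = 0
    · rw [if_pos hj2] at hcond
      by_cases h2 : β.length % 2 = 0
      · simp only [efn, if_pos h2] at hcond ⊢
        exact ⟨q - β.sum, by omega, by omega, by omega⟩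
      · simp only [efn, if_neg h2] at hcond ⊢
        exact ⟨β.sum + a - q, by omega, by omega, by omega⟩
    · rw [if_neg hj2] at hcond
      by_cases h2 : β.length % 2 = 0
      · simp only [efn, if_pos h2] at hcond ⊢
        exact ⟨q - β.sum, by omega, by omega, by omega⟩
      · simp only [efn, if_neg h2] at hcond ⊢
        rcases hB with hB | hB
        · exact ⟨β.sum + a - q, by omega, by omega, by omega⟩
        · exact ⟨β.sum + a - q, by omega, by omega, by omega⟩

/-- The `i`-th lowest element of the last segment, as an element of `Fin`. -/
def eFin (i : ℕ) : Fin ((β ++ [a]).sum + 1) :=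
  ⟨min (efn β a i) ((β ++ [a]).sum), Nat.lt_succ_of_le (Nat.min_le_right _ _)⟩

lemma eFin_val {i : ℕ} (hi : i ≤ a) : (eFin β a i : ℕ) = efn β a i := by
  simp only [eFin]
  exact min_eq_left (by rw [sum_app]; exact efn_le β a hi)

lemma eFin_inj {i j : ℕ} (hi : i ≤ a) (hj : j ≤ a) (h : eFin β a i = eFin β a j) : i = j := by
  apply efn_inj β a hi hj
  rw [← eFin_val β a hi, ← eFin_val β a hj, h]

/-- The number of elements of the last segment contained in `I`. -/
def tIdx (I : Finset (Fin ((β ++ [a]).sum + 1))) : ℕ :=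
  ((Finset.range (a + 1)).filter (fun i => eFin β a i ∈ I)).card

lemma lower_eq_range (S : Finset ℕ) (h : ∀ i j, i ≤ j → j ∈ S → i ∈ S) :
    S = Finset.range S.card := by
  have hsub : S ⊆ Finset.range S.card := by
    intro i hi
    rw [Finset.mem_range]
    have hss : Finset.range (i + 1) ⊆ S := by
      intro x hx
      exact h x i (by simpa using Nat.lt_succ_iff.mp (Finset.mem_range.mp hx)) hi
    have := Finset.card_le_card hss
    simp only [Finset.card_range] at this
    omega
  exact Finset.eq_of_subset_of_card_le hsub (by simp)

lemma tIdx_le (I : Finset (Fin ((β ++ [a]).sum + 1))) : tIdx β a I ≤ a + 1 := by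
  have := Finset.card_filter_le (Finset.range (a + 1)) (fun i => eFin β a i ∈ I)
  simpa [tIdx] using this

lemma mem_iff_lt_tIdx {I : Finset (Fin ((β ++ [a]).sum + 1))}
    (hI : IsFenceIdeal (β ++ [a]) I) {i : ℕ} (hi : i ≤ a) :
    eFin β a i ∈ I ↔ i < tIdx β a I := by
  set S := (Finset.range (a + 1)).filter (fun i => eFin β a i ∈ I) with hS
  have hlow : ∀ i j, i ≤ j → j ∈ S → i ∈ S := by
    intro i j hij hj
    simp only [hS, Finset.mem_filter, Finset.mem_range] at hj ⊢
    obtain ⟨hj1, hj2⟩ := hj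
    refine ⟨by omega, ?_⟩
    refine hI (eFin β a i) (eFin β a j) ?_ hj2
    have hm := fenceLe_efn_mono β a hij (show j ≤ a by omega)
    rwa [← eFin_val β a (show i ≤ a by omega), ← eFin_val β a (show j ≤ a by omega)] at hm
  have hrange := lower_eq_range S hlow
  constructor
  · intro h
    have : i ∈ S := by simp [hS, Finset.mem_filter, Finset.mem_range]; exact ⟨by omega, h⟩
    rw [hrange] at this
    simpa [tIdx, ← hS] using this
  · intro h
    have : i ∈ S := by rw [hrange]; simpa [tIdx, ← hS] using h
    simp only [hS, Finset.mem_filter] at this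
    exact this.2

lemma tIdx_le_card (I : Finset (Fin ((β ++ [a]).sum + 1))) : tIdx β a I ≤ I.card := by
  apply Finset.card_le_card_of_injOn (fun i => eFin β a i)
  · intro i hi
    simp only [Finset.mem_coe, Finset.mem_filter] at hi
    exact hi.2
  · intro i hi j hj h
    simp only [Finset.coe_filter, Set.mem_setOf_eq, Finset.mem_range] at hi hj
    exact eFin_inj β a (by omega) (by omega) h

lemma card_le_sum_add_tIdx {I : Finset (Fin ((β ++ [a]).sum + 1))}
    (hI : IsFenceIdeal (β ++ [a]) I) : I.card ≤ β.sum + tIdx β a I := by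
  classical
  have hsplit := Finset.card_filter_add_card_filter_not
    (s := I) (p := fun x => x.val < β.sum)
  have h1 : (I.filter (fun x => x.val < β.sum)).card ≤ β.sum := by
    have : (I.filter (fun x => x.val < β.sum)).card ≤ (Finset.range β.sum).card := by
      refine Finset.card_le_card_of_injOn (fun x => (x : ℕ)) ?_ ?_
      · intro x hx
        simp only [Finset.mem_coe, Finset.mem_filter] at hx
        simpa using hx.2
      · intro x _ y _ h
        exact Fin.val_injective h
    simpa using this
  have h2 : (I.filter (fun x => ¬ x.val < β.sum)).card ≤ tIdx β a I := by
    have hsub : I.filter (fun x => ¬ x.val < β.sum) ⊆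
        (Finset.range (tIdx β a I)).image (fun i => eFin β a i) := by
      intro x hx
      simp only [Finset.mem_filter, not_lt] at hx
      obtain ⟨hxI, hxge⟩ := hx
      have hxle : x.val ≤ β.sum + a := by
        have h1 := x.isLt
        have h2 := sum_app β a
        omega
      obtain ⟨i, hia, hxe⟩ := exists_efn β a hxge hxle
      have hxeF : x = eFin β a i := Fin.val_injective (by rw [eFin_val β a hia]; exact hxe)
      have : eFin β a i ∈ I := hxeF ▸ hxI
      rw [mem_iff_lt_tIdx β a hI hia] at this
      exact Finset.mem_image.mpr ⟨i, Finset.mem_range.mpr this, hxeF.symm⟩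
    calc (I.filter (fun x => ¬ x.val < β.sum)).card
        ≤ ((Finset.range (tIdx β a I)).image (fun i => eFin β a i)).card :=
          Finset.card_le_card hsub
      _ ≤ (Finset.range (tIdx β a I)).card := Finset.card_image_le
      _ = tIdx β a I := Finset.card_range _
  omega

lemma tIdx_insert {I : Finset (Fin ((β ++ [a]).sum + 1))}
    (hI : IsFenceIdeal (β ++ [a]) I) (ht : tIdx β a I ≤ a) :
    tIdx β a (insert (eFin β a (tIdx β a I)) I) = tIdx β a I + 1 := by
  classical
  have key : (Finset.range (a + 1)).filter
        (fun i => eFin β a i ∈ insert (eFin β a (tIdx β a I)) I)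
      = Finset.range (tIdx β a I + 1) := by
    ext i
    simp only [Finset.mem_filter, Finset.mem_range, Finset.mem_insert]
    constructor
    · rintro ⟨hia, h | h⟩
      · have := eFin_inj β a (by omega) ht h
        omega
      · have := (mem_iff_lt_tIdx β a hI (show i ≤ a by omega)).mp h
        omega
    · intro h
      have hia : i ≤ a := by omega
      refine ⟨by omega, ?_⟩
      rcases Nat.lt_succ_iff_lt_or_eq.mp h with h' | h'
      · exact Or.inr ((mem_iff_lt_tIdx β a hI hia).mpr h')
      · exact Or.inl (by rw [h'])
  calc tIdx β a (insert (eFin β a (tIdx β a I)) I)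
      = ((Finset.range (a + 1)).filter
          (fun i => eFin β a i ∈ insert (eFin β a (tIdx β a I)) I)).card := rfl
    _ = tIdx β a I + 1 := by rw [key, Finset.card_range]

lemma tIdx_erase {I : Finset (Fin ((β ++ [a]).sum + 1))}
    (hI : IsFenceIdeal (β ++ [a]) I) (ht : 1 ≤ tIdx β a I) (ht2 : tIdx β a I ≤ a + 1) :
    tIdx β a (I.erase (eFin β a (tIdx β a I - 1))) = tIdx β a I - 1 := by
  classical
  have key : (Finset.range (a + 1)).filter
        (fun i => eFin β a i ∈ I.erase (eFin β a (tIdx β a I - 1)))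
      = Finset.range (tIdx β a I - 1) := by
    ext i
    simp only [Finset.mem_filter, Finset.mem_range, Finset.mem_erase]
    constructor
    · rintro ⟨hia, hne, hmem⟩
      have h1 := (mem_iff_lt_tIdx β a hI (show i ≤ a by omega)).mp hmem
      have h2 : i ≠ tIdx β a I - 1 := fun h => hne (by rw [h])
      omega
    · intro h
      have hia : i ≤ a := by omega
      refine ⟨by omega, ?_, (mem_iff_lt_tIdx β a hI hia).mpr (by omega)⟩
      intro hcon
      have := eFin_inj β a hia (by omega) hcon
      omega
  calc tIdx β a (I.erase (eFin β a (tIdx β a I - 1)))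
      = ((Finset.range (a + 1)).filter
          (fun i => eFin β a i ∈ I.erase (eFin β a (tIdx β a I - 1)))).card := rfl
    _ = tIdx β a I - 1 := by rw [key, Finset.card_range]

lemma insert_is_ideal (hβ : ∀ x ∈ β, 0 < x) {I : Finset (Fin ((β ++ [a]).sum + 1))}
    (hI : IsFenceIdeal (β ++ [a]) I) (ht : tIdx β a I < a) :
    IsFenceIdeal (β ++ [a]) (insert (eFin β a (tIdx β a I)) I) := by
  intro p q hpq hq
  rcases Finset.mem_insert.mp hq with hq | hq
  · rw [hq] at hpq
    have hpq' : fenceLe (β ++ [a]) (p : ℕ) (efn β a (tIdx β a I)) := by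
      rwa [eFin_val β a (le_of_lt ht)] at hpq
    obtain ⟨i, hit, hp⟩ := fenceLe_to_efn β a hβ ht hpq'
    have hpi : p = eFin β a i := by
      apply Fin.val_injective
      rw [eFin_val β a (show i ≤ a by omega)]
      exact hp
    rcases Nat.lt_or_ge i (tIdx β a I) with h' | h'
    · exact Finset.mem_insert_of_mem
        (hpi ▸ (mem_iff_lt_tIdx β a hI (show i ≤ a by omega)).mpr h')
    · have : i = tIdx β a I := by omega
      rw [hpi, this]
      exact Finset.mem_insert_self _ _
  · exact Finset.mem_insert_of_mem (hI p q hpq hq)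

lemma erase_is_ideal (hβ : ∀ x ∈ β, 0 < x) {I : Finset (Fin ((β ++ [a]).sum + 1))}
    (hI : IsFenceIdeal (β ++ [a]) I) (ht : 2 ≤ tIdx β a I) (ht2 : tIdx β a I ≤ a + 1) :
    IsFenceIdeal (β ++ [a]) (I.erase (eFin β a (tIdx β a I - 1))) := by
  intro p q hpq hq
  rw [Finset.mem_erase] at hq
  obtain ⟨hqne, hqI⟩ := hq
  rw [Finset.mem_erase]
  refine ⟨?_, hI p q hpq hqI⟩
  intro hcon
  rw [hcon] at hpq
  have hpq' : fenceLe (β ++ [a]) (efn β a (tIdx β a I - 1)) (q : ℕ) := by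
    rwa [eFin_val β a (show tIdx β a I - 1 ≤ a by omega)] at hpq
  have hqle : (q : ℕ) ≤ β.sum + a := by
    have h1 := q.isLt
    have h2 := sum_app β a
    omega
  obtain ⟨i, hi1, hi2, hq'⟩ := efn_to_fenceLe β a hβ (by omega) (by omega) hqle hpq'
  have hqi : q = eFin β a i := by
    apply Fin.val_injective
    rw [eFin_val β a hi2]
    exact hq'
  have hine : i ≠ tIdx β a I - 1 := by
    intro h
    exact hqne (by rw [hqi, h])
  have : i < tIdx β a I := (mem_iff_lt_tIdx β a hI hi2).mp (hqi ▸ hqI)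
  omega

lemma rk_up (hβ : ∀ x ∈ β, 0 < x) {k : ℕ} (hk : k + 1 ≤ a) :
    fenceRk (β ++ [a]) k ≤ fenceRk (β ++ [a]) (k + 1) := by
  classical
  unfold fenceRk
  have main : ∀ I : Finset (Fin ((β ++ [a]).sum + 1)),
      IsFenceIdeal (β ++ [a]) I → I.card = k →
      IsFenceIdeal (β ++ [a]) (insert (eFin β a (tIdx β a I)) I) ∧
        (insert (eFin β a (tIdx β a I)) I).card = k + 1 := by
    intro I hI hc
    have htk : tIdx β a I ≤ k := hc ▸ tIdx_le_card β a I
    have htlt : tIdx β a I < a := by omega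
    have hnotmem : eFin β a (tIdx β a I) ∉ I := by
      intro h
      have := (mem_iff_lt_tIdx β a hI (le_of_lt htlt)).mp h
      omega
    exact ⟨insert_is_ideal β a hβ hI htlt,
      by rw [Finset.card_insert_of_notMem hnotmem, hc]⟩
  refine Nat.card_le_card_of_injective
    (fun X => ⟨insert (eFin β a (tIdx β a X.1)) X.1,
      (main X.1 X.2.1 X.2.2).1, (main X.1 X.2.1 X.2.2).2⟩) ?_
  intro X Y h
  have hE : insert (eFin β a (tIdx β a X.1)) X.1 = insert (eFin β a (tIdx β a Y.1)) Y.1 :=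
    congrArg Subtype.val h
  have htX : tIdx β a X.1 ≤ a := by
    have := X.2.2 ▸ tIdx_le_card β a X.1; omega
  have htY : tIdx β a Y.1 ≤ a := by
    have := Y.2.2 ▸ tIdx_le_card β a Y.1; omega
  have e1 := tIdx_insert β a X.2.1 htX
  have e2 := tIdx_insert β a Y.2.1 htY
  rw [hE] at e1
  rw [e2] at e1
  have htXY : tIdx β a X.1 = tIdx β a Y.1 := by omega
  have hnmX : eFin β a (tIdx β a X.1) ∉ X.1 := by
    intro hmem
    have := (mem_iff_lt_tIdx β a X.2.1 htX).mp hmem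
    omega
  have hnmY : eFin β a (tIdx β a Y.1) ∉ Y.1 := by
    intro hmem
    have := (mem_iff_lt_tIdx β a Y.2.1 htY).mp hmem
    omega
  apply Subtype.ext
  calc X.1 = (insert (eFin β a (tIdx β a X.1)) X.1).erase (eFin β a (tIdx β a X.1)) :=
        (Finset.erase_insert hnmX).symm
    _ = (insert (eFin β a (tIdx β a Y.1)) Y.1).erase (eFin β a (tIdx β a Y.1)) := by
        rw [hE, htXY]
    _ = Y.1 := Finset.erase_insert hnmY

lemma rk_down (hβ : ∀ x ∈ β, 0 < x) {k : ℕ} (hk : β.sum + 1 ≤ k) :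
    fenceRk (β ++ [a]) (k + 1) ≤ fenceRk (β ++ [a]) k := by
  classical
  unfold fenceRk
  have main : ∀ I : Finset (Fin ((β ++ [a]).sum + 1)),
      IsFenceIdeal (β ++ [a]) I → I.card = k + 1 →
      IsFenceIdeal (β ++ [a]) (I.erase (eFin β a (tIdx β a I - 1))) ∧
        (I.erase (eFin β a (tIdx β a I - 1))).card = k ∧ 2 ≤ tIdx β a I := by
    intro I hI hc
    have ht2 : 2 ≤ tIdx β a I := by
      have := card_le_sum_add_tIdx β a hI
      omega
    have hta : tIdx β a I ≤ a + 1 := tIdx_le β a I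
    have hmem : eFin β a (tIdx β a I - 1) ∈ I :=
      (mem_iff_lt_tIdx β a hI (show tIdx β a I - 1 ≤ a by omega)).mpr (by omega)
    refine ⟨erase_is_ideal β a hβ hI ht2 hta, ?_, ht2⟩
    rw [Finset.card_erase_of_mem hmem, hc]
    omega
  refine Nat.card_le_card_of_injective
    (fun X => ⟨X.1.erase (eFin β a (tIdx β a X.1 - 1)),
      (main X.1 X.2.1 X.2.2).1, (main X.1 X.2.1 X.2.2).2.1⟩) ?_
  intro X Y h
  have hE : X.1.erase (eFin β a (tIdx β a X.1 - 1))
      = Y.1.erase (eFin β a (tIdx β a Y.1 - 1)) :=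
    congrArg Subtype.val h
  have htX2 := (main X.1 X.2.1 X.2.2).2.2
  have htY2 := (main Y.1 Y.2.1 Y.2.2).2.2
  have e1 := tIdx_erase β a X.2.1 (by omega) (tIdx_le β a X.1)
  have e2 := tIdx_erase β a Y.2.1 (by omega) (tIdx_le β a Y.1)
  rw [hE] at e1
  rw [e2] at e1
  have htXY : tIdx β a X.1 = tIdx β a Y.1 := by omega
  have hmX : eFin β a (tIdx β a X.1 - 1) ∈ X.1 :=
    (mem_iff_lt_tIdx β a X.2.1
      (show tIdx β a X.1 - 1 ≤ a by have := tIdx_le β a X.1; omega)).mpr (by omega)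
  have hmY : eFin β a (tIdx β a Y.1 - 1) ∈ Y.1 :=
    (mem_iff_lt_tIdx β a Y.2.1
      (show tIdx β a Y.1 - 1 ≤ a by have := tIdx_le β a Y.1; omega)).mpr (by omega)
  apply Subtype.ext
  calc X.1 = insert (eFin β a (tIdx β a X.1 - 1)) (X.1.erase (eFin β a (tIdx β a X.1 - 1))) :=
        (Finset.insert_erase hmX).symm
    _ = insert (eFin β a (tIdx β a Y.1 - 1)) (Y.1.erase (eFin β a (tIdx β a Y.1 - 1))) := by
        rw [hE, htXY]
    _ = Y.1 := Finset.insert_erase hmY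

end FenceAux

/-- If `α_s ≥ α₁ + ⋯ + α_{s-1}` then `r(q;α)` is unimodal.
Here `α = β ++ [a]`, so `a = α_s`. -/
theorem rpoly_unimodal_long_last (β : List ℕ) (a : ℕ) (ha : 0 < a)
    (hβ : ∀ x ∈ β, 0 < x) (hlong : β.sum ≤ a) :
    SeqUnimodal (fenceRk (β ++ [a])) := by
  set r := fenceRk (β ++ [a]) with hr
  have hup : ∀ k, k + 1 ≤ a → r k ≤ r (k + 1) := fun k hk => FenceAux.rk_up β a hβ hk
  have hdown : ∀ k, β.sum + 1 ≤ k → r (k + 1) ≤ r k := fun k hk => FenceAux.rk_down β a hβ hk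
  have incr : ∀ j, j ≤ a → ∀ i, i ≤ j → r i ≤ r j := by
    intro j
    induction j with
    | zero =>
      intro _ i hi
      have : i = 0 := by omega
      rw [this]
    | succ j ih =>
      intro hj i hi
      by_cases hij : i = j + 1
      · rw [hij]
      · exact le_trans (ih (by omega) i (by omega)) (hup j hj)
  have decr : ∀ i, β.sum + 1 ≤ i → ∀ d, r (i + d) ≤ r i := by
    intro i hi d
    induction d with
    | zero => exact le_rfl
    | succ d ih =>
      have : i + (d + 1) = (i + d) + 1 := by omega
      rw [this]
      exact le_trans (hdown (i + d) (by omega)) ih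
  have decr' : ∀ i j, β.sum + 1 ≤ i → i ≤ j → r j ≤ r i := by
    intro i j hi hij
    have : j = i + (j - i) := by omega
    rw [this]
    exact decr i hi (j - i)
  by_cases hm : r (a + 1) ≤ r a
  · refine ⟨a, fun i j hij => ⟨fun hj => incr j hj i hij, fun hi => ?_⟩⟩
    by_cases hia : i = a
    · by_cases hja : j = a
      · rw [hia, hja]
      · calc r j ≤ r (a + 1) := decr' (a + 1) j (by omega) (by omega)
          _ ≤ r a := hm
          _ = r i := by rw [hia]
    · exact decr' i j (by omega) hij
  · have hm' : r a ≤ r (a + 1) := le_of_not_ge hm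
    refine ⟨a + 1, fun i j hij => ⟨fun hj => ?_, fun hi => decr' i j (by omega) hij⟩⟩
    by_cases hja : j = a + 1
    · by_cases hia : i = a + 1
      · rw [hia, hja]
      · calc r i ≤ r a := incr a le_rfl i (by omega)
          _ ≤ r (a + 1) := hm'
          _ = r j := by rw [hja]
    · exact incr j (by omega) i hij
end

section
/- Let α = (α₁,…,α_s) be a composition, n = |F(α)|, and suppose α_t > Σ_{i≠t} α_i for some index t. Let F′ be the poset obtained from F(α) by removing all elements of segment t, let m = |F′| and ℓ = |L(F′)|. Then the maximum cardinality of a rank of L(α) equals ℓ, and r_k(α) = ℓ for all k with m+1 ≤ k ≤ n−m−1. -/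
open Polynomial

namespace FenceAux

lemma sum_take_le_s7 (l : List ℕ) (i : ℕ) : (l.take i).sum ≤ l.sum := by
  conv_rhs => rw [← List.take_append_drop i l]
  rw [List.sum_append]
  exact Nat.le_add_right _ _

lemma sum_take_mono (l : List ℕ) {i j : ℕ} (h : i ≤ j) :
    (l.take i).sum ≤ (l.take j).sum := by
  calc (l.take i).sum = ((l.take j).take i).sum := by
        rw [List.take_take, Nat.min_eq_left h]
    _ ≤ (l.take j).sum := sum_take_le_s7 _ _

lemma sum_take_strict (l : List ℕ) (hpos : ∀ x ∈ l, 0 < x) {i j : ℕ}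
    (hij : i < j) (hj : j ≤ l.length) : (l.take i).sum < (l.take j).sum := by
  have hi : i < l.length := lt_of_lt_of_le hij hj
  have h1 : (l.take (i + 1)).sum = (l.take i).sum + l[i] := List.sum_take_succ l i hi
  have h2 : 0 < l[i] := hpos _ (l.getElem_mem hi)
  have h3 : (l.take (i + 1)).sum ≤ (l.take j).sum := sum_take_mono l hij
  omega

lemma take_succ_sum {α : List ℕ} {t : ℕ} (ht : t < α.length) :
    (α.take (t + 1)).sum = (α.take t).sum + α.get ⟨t, ht⟩ := by
  rw [List.sum_take_succ α t ht]
  simp [List.get_eq_getElem]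

lemma sum_decomp {α : List ℕ} {t : ℕ} (ht : t < α.length) :
    α.sum = (α.take t).sum + (α.drop (t + 1)).sum + α.get ⟨t, ht⟩ := by
  have h1 : (α.take (t + 1)).sum + (α.drop (t + 1)).sum = α.sum := by
    rw [← List.sum_append, List.take_append_drop]
  have h2 := take_succ_sum ht
  omega

variable {α : List ℕ} {t : ℕ}

lemma endpoint_cases (hpos : ∀ x ∈ α, 0 < x) (ht : t < α.length) {j x : ℕ}
    (hj : j < α.length) (hjt : j ≠ t)
    (h1 : (α.take j).sum ≤ x) (h2 : x ≤ (α.take (j + 1)).sum)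
    (ha : (α.take t).sum ≤ x) (hb : x ≤ (α.take (t + 1)).sum) :
    (x = (α.take t).sum ∧ (α.take (j + 1)).sum = (α.take t).sum ∧ j + 1 = t) ∨
    (x = (α.take (t + 1)).sum ∧ (α.take j).sum = (α.take (t + 1)).sum ∧ j = t + 1) := by
  rcases Nat.lt_or_ge j t with hlt | hge
  · left
    have h3 : (α.take (j + 1)).sum ≤ (α.take t).sum := sum_take_mono α hlt
    have hx : x = (α.take t).sum := le_antisymm (le_trans h2 h3) ha
    have he : (α.take (j + 1)).sum = (α.take t).sum := le_antisymm h3 (hx ▸ h2)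
    refine ⟨hx, he, ?_⟩
    by_contra hne
    have h4 : (α.take (j + 1)).sum < (α.take t).sum :=
      sum_take_strict α hpos (by omega) (le_of_lt ht)
    omega
  · have hgt : t < j := lt_of_le_of_ne hge (Ne.symm hjt)
    right
    have h3 : (α.take (t + 1)).sum ≤ (α.take j).sum := sum_take_mono α hgt
    have hx : x = (α.take (t + 1)).sum := le_antisymm hb (le_trans h3 h1)
    have he : (α.take j).sum = (α.take (t + 1)).sum := le_antisymm (hx ▸ h1) h3
    refine ⟨hx, he, ?_⟩
    by_contra hne
    have h4 : (α.take (t + 1)).sum < (α.take j).sum :=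
      sum_take_strict α hpos (by omega) (le_of_lt hj)
    omega


/-- The intersection of a fence ideal with segment `t`, of prescribed size `z`. -/
def chunk (α : List ℕ) (t z : ℕ) : Finset (Fin (α.sum + 1)) :=
  if t % 2 = 0 then
    Finset.univ.filter
      (fun p : Fin (α.sum + 1) => (α.take t).sum ≤ (p : ℕ) ∧ (p : ℕ) < (α.take t).sum + z)
  else
    Finset.univ.filter
      (fun p : Fin (α.sum + 1) =>
        (α.take (t + 1)).sum + 1 - z ≤ (p : ℕ) ∧ (p : ℕ) < (α.take (t + 1)).sum + 1)

lemma card_filter_Ico (n lo hi : ℕ) (h : hi ≤ n) :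
    (Finset.univ.filter (fun p : Fin n => lo ≤ (p : ℕ) ∧ (p : ℕ) < hi)).card = hi - lo := by
  rw [← Nat.card_Ico lo hi]
  apply Finset.card_bij (fun (p : Fin n) _ => (p : ℕ))
  · intro p hp
    simp only [Finset.mem_filter] at hp
    simp only [Finset.mem_Ico]
    exact hp.2
  · intro p hp q hq hpq
    exact Fin.ext hpq
  · intro x hx
    simp only [Finset.mem_Ico] at hx
    exact ⟨⟨x, lt_of_lt_of_le hx.2 h⟩, by simp [hx.1, hx.2], rfl⟩

lemma mem_chunk (ht : t < α.length) {z : ℕ} (hz : z ≤ α.get ⟨t, ht⟩ + 1) {p : Fin (α.sum + 1)}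
    (hp : p ∈ chunk α t z) :
    (α.take t).sum ≤ (p : ℕ) ∧ (p : ℕ) ≤ (α.take (t + 1)).sum := by
  have hAB := take_succ_sum ht
  by_cases ht2 : t % 2 = 0 <;>
    simp only [chunk, ht2, if_true, if_false, Finset.mem_filter, Finset.mem_univ, true_and,
      reduceIte] at hp <;> omega

lemma card_chunk (ht : t < α.length) {z : ℕ} (hz : z ≤ α.get ⟨t, ht⟩ + 1) :
    (chunk α t z).card = z := by
  have hAB := take_succ_sum ht
  have hBn : (α.take (t + 1)).sum ≤ α.sum := sum_take_le_s7 α (t + 1)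
  by_cases ht2 : t % 2 = 0
  · rw [chunk, if_pos ht2, card_filter_Ico _ _ _ (by omega)]
    omega
  · rw [chunk, if_neg ht2, card_filter_Ico _ _ _ (by omega)]
    omega

/-- a finite set in `[a, c)` that is downward closed above `a` is an initial interval. -/
lemma shape_down {n a c : ℕ} (hac : a ≤ c) (hc : c ≤ n) (S : Finset (Fin n))
    (hS1 : ∀ p ∈ S, a ≤ (p : ℕ) ∧ (p : ℕ) < c)
    (hS2 : ∀ q ∈ S, ∀ p : Fin n, a ≤ (p : ℕ) → (p : ℕ) ≤ (q : ℕ) → p ∈ S) :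
    S = Finset.univ.filter (fun p : Fin n => a ≤ (p : ℕ) ∧ (p : ℕ) < a + S.card) := by
  have hcardle : S.card ≤ c - a := by
    have hsub : S ⊆ Finset.univ.filter (fun p : Fin n => a ≤ (p : ℕ) ∧ (p : ℕ) < c) := by
      intro p hp; simp only [Finset.mem_filter, Finset.mem_univ, true_and]; exact hS1 p hp
    have := Finset.card_le_card hsub
    rwa [card_filter_Ico n a c hc] at this
  have hsub : S ⊆ Finset.univ.filter (fun p : Fin n => a ≤ (p : ℕ) ∧ (p : ℕ) < a + S.card) := by
    intro p hp
    simp only [Finset.mem_filter, Finset.mem_univ, true_and]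
    refine ⟨(hS1 p hp).1, ?_⟩
    by_contra hcon
    push_neg at hcon
    have hsub2 : Finset.univ.filter (fun q : Fin n => a ≤ (q : ℕ) ∧ (q : ℕ) < (p : ℕ) + 1) ⊆ S := by
      intro q hq
      simp only [Finset.mem_filter, Finset.mem_univ, true_and] at hq
      exact hS2 p hp q hq.1 (by omega)
    have hcard := Finset.card_le_card hsub2
    rw [card_filter_Ico n a ((p : ℕ) + 1) p.isLt] at hcard
    have := (hS1 p hp).1
    omega
  apply (Finset.eq_of_subset_of_card_le hsub ?_)
  rw [card_filter_Ico n a (a + S.card) (by omega)]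
  omega

/-- a finite set in `[c, b]` that is upward closed below `b` is a final interval. -/
lemma shape_up {n c b : ℕ} (hcb : c ≤ b + 1) (hb : b < n) (S : Finset (Fin n))
    (hS1 : ∀ p ∈ S, c ≤ (p : ℕ) ∧ (p : ℕ) < b + 1)
    (hS2 : ∀ q ∈ S, ∀ p : Fin n, (q : ℕ) ≤ (p : ℕ) → (p : ℕ) < b + 1 → p ∈ S) :
    S = Finset.univ.filter (fun p : Fin n => b + 1 - S.card ≤ (p : ℕ) ∧ (p : ℕ) < b + 1) := by
  have hcardle : S.card ≤ b + 1 - c := by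
    have hsub : S ⊆ Finset.univ.filter (fun p : Fin n => c ≤ (p : ℕ) ∧ (p : ℕ) < b + 1) := by
      intro p hp; simp only [Finset.mem_filter, Finset.mem_univ, true_and]; exact hS1 p hp
    have := Finset.card_le_card hsub
    rwa [card_filter_Ico n c (b + 1) hb] at this
  have hsub : S ⊆ Finset.univ.filter
      (fun p : Fin n => b + 1 - S.card ≤ (p : ℕ) ∧ (p : ℕ) < b + 1) := by
    intro p hp
    simp only [Finset.mem_filter, Finset.mem_univ, true_and]
    refine ⟨?_, (hS1 p hp).2⟩
    by_contra hcon
    push_neg at hcon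
    have hsub2 : Finset.univ.filter (fun q : Fin n => (p : ℕ) ≤ (q : ℕ) ∧ (q : ℕ) < b + 1) ⊆ S := by
      intro q hq
      simp only [Finset.mem_filter, Finset.mem_univ, true_and] at hq
      exact hS2 p hp q hq.1 hq.2
    have hcard := Finset.card_le_card hsub2
    rw [card_filter_Ico n (p : ℕ) (b + 1) hb] at hcard
    have := (hS1 p hp).2
    omega
  apply (Finset.eq_of_subset_of_card_le hsub ?_)
  rw [card_filter_Ico n (b + 1 - S.card) (b + 1) hb]
  omega


/-- The trace of a fence ideal on segment `t` is a `chunk`. -/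
lemma trace_seg (hpos : ∀ x ∈ α, 0 < x) (ht : t < α.length)
    {I : Finset (Fin (α.sum + 1))} (hI : IsFenceIdeal α I) :
    I.filter (fun p : Fin (α.sum + 1) =>
        (α.take t).sum ≤ (p : ℕ) ∧ (p : ℕ) ≤ (α.take (t + 1)).sum)
      = chunk α t
        (I.filter (fun p : Fin (α.sum + 1) =>
          (α.take t).sum ≤ (p : ℕ) ∧ (p : ℕ) ≤ (α.take (t + 1)).sum)).card := by
  have hAB := take_succ_sum ht
  have hBn : (α.take (t + 1)).sum ≤ α.sum := sum_take_le_s7 α (t + 1)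
  have hAle : (α.take t).sum ≤ (α.take (t + 1)).sum := sum_take_mono α (by omega)
  by_cases ht2 : t % 2 = 0
  · rw [chunk, if_pos ht2]
    apply shape_down (c := (α.take (t + 1)).sum + 1) (by omega) (by omega)
    · intro p hp
      simp only [Finset.mem_filter] at hp
      omega
    · intro q hq p hap hpq
      simp only [Finset.mem_filter] at hq ⊢
      have hle : fenceLe α (p : ℕ) (q : ℕ) := by
        refine Or.inr ⟨t, ht, ?_⟩
        rw [if_pos ht2]
        exact ⟨hap, hpq, hq.2.2⟩
      exact ⟨hI p q hle hq.1, hap, le_trans hpq hq.2.2⟩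
  · rw [chunk, if_neg ht2]
    apply shape_up (c := (α.take t).sum) (by omega) (by omega)
    · intro p hp
      simp only [Finset.mem_filter] at hp
      omega
    · intro q hq p hqp hpb
      simp only [Finset.mem_filter] at hq ⊢
      have hle : fenceLe α (p : ℕ) (q : ℕ) := by
        refine Or.inr ⟨t, ht, ?_⟩
        rw [if_neg ht2]
        exact ⟨hq.2.1, hqp, by omega⟩
      exact ⟨hI p q hle hq.1, le_trans hq.2.1 hqp, by omega⟩


/-- Gluing an `F'`-ideal with a chunk yields a fence ideal. -/
lemma build (hpos : ∀ x ∈ α, 0 < x) (ht : t < α.length)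
    {J : Finset (Fin (α.sum + 1))}
    (hJ1 : ∀ p ∈ J, ¬((α.take t).sum ≤ (p : ℕ) ∧ (p : ℕ) ≤ (α.take (t + 1)).sum))
    (hJ2 : ∀ p q : Fin (α.sum + 1),
      ¬((α.take t).sum ≤ (p : ℕ) ∧ (p : ℕ) ≤ (α.take (t + 1)).sum) →
      ¬((α.take t).sum ≤ (q : ℕ) ∧ (q : ℕ) ≤ (α.take (t + 1)).sum) →
      fenceLe α p q → q ∈ J → p ∈ J)
    {z : ℕ} (hz1 : 1 ≤ z) (hz2 : z ≤ α.get ⟨t, ht⟩) :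
    IsFenceIdeal α (J ∪ chunk α t z) := by
  have hAB := take_succ_sum ht
  have hBn : (α.take (t + 1)).sum ≤ α.sum := sum_take_le_s7 α (t + 1)
  intro p q hle hq
  have hle0 := hle
  rcases hle with heq | ⟨j, hj, hcond⟩
  · have : p = q := Fin.val_injective heq
    rw [this]; exact hq
  have hcond' :
      ((α.take j).sum ≤ (p : ℕ) ∧ (p : ℕ) ≤ (q : ℕ) ∧ (q : ℕ) ≤ (α.take (j + 1)).sum
        ∧ j % 2 = 0) ∨
      ((α.take j).sum ≤ (q : ℕ) ∧ (q : ℕ) ≤ (p : ℕ) ∧ (p : ℕ) ≤ (α.take (j + 1)).sum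
        ∧ j % 2 = 1) := by
    by_cases hj2 : j % 2 = 0
    · rw [if_pos hj2] at hcond; exact Or.inl ⟨hcond.1, hcond.2.1, hcond.2.2, hj2⟩
    · rw [if_neg hj2] at hcond; exact Or.inr ⟨hcond.1, hcond.2.1, hcond.2.2, by omega⟩
  have hp_in : (α.take j).sum ≤ (p : ℕ) ∧ (p : ℕ) ≤ (α.take (j + 1)).sum := by
    rcases hcond' with ⟨h1, h2, h3, _⟩ | ⟨h1, h2, h3, _⟩ <;> omega
  have hq_in : (α.take j).sum ≤ (q : ℕ) ∧ (q : ℕ) ≤ (α.take (j + 1)).sum := by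
    rcases hcond' with ⟨h1, h2, h3, _⟩ | ⟨h1, h2, h3, _⟩ <;> omega
  by_cases ht2 : t % 2 = 0
  · -- segment t ascending
    have hqC' : q ∈ J ∨ ((α.take t).sum ≤ (q : ℕ) ∧ (q : ℕ) < (α.take t).sum + z) := by
      rcases Finset.mem_union.mp hq with h | h
      · exact Or.inl h
      · right
        simpa [chunk, ht2] using h
    have goalC : ((α.take t).sum ≤ (p : ℕ) ∧ (p : ℕ) < (α.take t).sum + z) →
        p ∈ J ∪ chunk α t z := by
      intro h
      refine Finset.mem_union_right _ ?_
      simp [chunk, ht2]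
      omega
    by_cases hjt : j = t
    · subst hjt
      rcases hcond' with ⟨h1, h2, h3, _⟩ | ⟨_, _, _, hpar⟩
      · rcases hqC' with hqJ | hqC
        · exact absurd ⟨by omega, by omega⟩ (hJ1 q hqJ)
        · exact goalC ⟨by omega, by omega⟩
      · exfalso; omega
    · by_cases hpseg : (α.take t).sum ≤ (p : ℕ) ∧ (p : ℕ) ≤ (α.take (t + 1)).sum
      · rcases endpoint_cases hpos ht hj hjt hp_in.1 hp_in.2 hpseg.1 hpseg.2 with
          ⟨hpA, he1, hjt1⟩ | ⟨hpB, he1, hjt1⟩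
        · exact goalC ⟨by omega, by omega⟩
        · rcases hcond' with ⟨_, _, _, hpar⟩ | ⟨h1, h2, _, _⟩
          · exfalso; omega
          · rcases hqC' with hqJ | hqC
            · exact absurd ⟨by omega, by omega⟩ (hJ1 q hqJ)
            · exfalso; omega
      · by_cases hqseg : (α.take t).sum ≤ (q : ℕ) ∧ (q : ℕ) ≤ (α.take (t + 1)).sum
        · rcases endpoint_cases hpos ht hj hjt hq_in.1 hq_in.2 hqseg.1 hqseg.2 with
            ⟨hqA, he1, hjt1⟩ | ⟨hqB, he1, hjt1⟩
          · rcases hcond' with ⟨_, _, _, hpar⟩ | ⟨h1, h2, h3, _⟩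
            · exfalso; omega
            · exact absurd ⟨by omega, by omega⟩ hpseg
          · rcases hqC' with hqJ | hqC
            · exact absurd ⟨by omega, by omega⟩ (hJ1 q hqJ)
            · exfalso; omega
        · rcases hqC' with hqJ | hqC
          · exact Finset.mem_union_left _ (hJ2 p q hpseg hqseg hle0 hqJ)
          · exact absurd ⟨by omega, by omega⟩ hqseg
  · -- segment t descending
    have hqC' : q ∈ J ∨
        ((α.take (t + 1)).sum + 1 - z ≤ (q : ℕ) ∧ (q : ℕ) < (α.take (t + 1)).sum + 1) := by
      rcases Finset.mem_union.mp hq with h | h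
      · exact Or.inl h
      · right
        simpa [chunk, ht2] using h
    have goalC : ((α.take (t + 1)).sum + 1 - z ≤ (p : ℕ) ∧ (p : ℕ) < (α.take (t + 1)).sum + 1) →
        p ∈ J ∪ chunk α t z := by
      intro h
      refine Finset.mem_union_right _ ?_
      simp [chunk, ht2]
      omega
    by_cases hjt : j = t
    · subst hjt
      rcases hcond' with ⟨_, _, _, hpar⟩ | ⟨h1, h2, h3, _⟩
      · exfalso; omega
      · rcases hqC' with hqJ | hqC
        · exact absurd ⟨by omega, by omega⟩ (hJ1 q hqJ)
        · exact goalC ⟨by omega, by omega⟩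
    · by_cases hpseg : (α.take t).sum ≤ (p : ℕ) ∧ (p : ℕ) ≤ (α.take (t + 1)).sum
      · rcases endpoint_cases hpos ht hj hjt hp_in.1 hp_in.2 hpseg.1 hpseg.2 with
          ⟨hpA, he1, hjt1⟩ | ⟨hpB, he1, hjt1⟩
        · rcases hcond' with ⟨h1, h2, h3, _⟩ | ⟨_, _, _, hpar⟩
          · rcases hqC' with hqJ | hqC
            · exact absurd ⟨by omega, by omega⟩ (hJ1 q hqJ)
            · exfalso; omega
          · exfalso; omega
        · exact goalC ⟨by omega, by omega⟩
      · by_cases hqseg : (α.take t).sum ≤ (q : ℕ) ∧ (q : ℕ) ≤ (α.take (t + 1)).sum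
        · rcases endpoint_cases hpos ht hj hjt hq_in.1 hq_in.2 hqseg.1 hqseg.2 with
            ⟨hqA, he1, hjt1⟩ | ⟨hqB, he1, hjt1⟩
          · rcases hqC' with hqJ | hqC
            · exact absurd ⟨by omega, by omega⟩ (hJ1 q hqJ)
            · exfalso; omega
          · rcases hcond' with ⟨h1, h2, h3, _⟩ | ⟨_, _, _, hpar⟩
            · exact absurd ⟨by omega, by omega⟩ hpseg
            · exfalso; omega
        · rcases hqC' with hqJ | hqC
          · exact Finset.mem_union_left _ (hJ2 p q hpseg hqseg hle0 hqJ)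
          · exact absurd ⟨by omega, by omega⟩ hqseg


lemma build_filter (ht : t < α.length) {J : Finset (Fin (α.sum + 1))}
    (hJ1 : ∀ p ∈ J, ¬((α.take t).sum ≤ (p : ℕ) ∧ (p : ℕ) ≤ (α.take (t + 1)).sum))
    {z : ℕ} (hz : z ≤ α.get ⟨t, ht⟩ + 1) :
    (J ∪ chunk α t z).filter
      (fun p : Fin (α.sum + 1) => ¬((α.take t).sum ≤ (p : ℕ) ∧ (p : ℕ) ≤ (α.take (t + 1)).sum)) = J := by
  rw [Finset.filter_union]
  rw [Finset.filter_true_of_mem hJ1,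
    Finset.filter_false_of_mem (fun p hp => not_not_intro (mem_chunk ht hz hp)),
    Finset.union_empty]

lemma build_disjoint (ht : t < α.length) {J : Finset (Fin (α.sum + 1))}
    (hJ1 : ∀ p ∈ J, ¬((α.take t).sum ≤ (p : ℕ) ∧ (p : ℕ) ≤ (α.take (t + 1)).sum))
    {z : ℕ} (hz : z ≤ α.get ⟨t, ht⟩ + 1) : Disjoint J (chunk α t z) := by
  rw [Finset.disjoint_left]
  intro x hxJ hxC
  exact hJ1 x hxJ (mem_chunk ht hz hxC)

lemma build_card (ht : t < α.length) {J : Finset (Fin (α.sum + 1))}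
    (hJ1 : ∀ p ∈ J, ¬((α.take t).sum ≤ (p : ℕ) ∧ (p : ℕ) ≤ (α.take (t + 1)).sum))
    {z : ℕ} (hz : z ≤ α.get ⟨t, ht⟩ + 1) :
    (J ∪ chunk α t z).card = J.card + z := by
  rw [Finset.card_union_of_disjoint (build_disjoint ht hJ1 hz), card_chunk ht hz]

lemma card_out (ht : t < α.length) {J : Finset (Fin (α.sum + 1))}
    (hJ1 : ∀ p ∈ J, ¬((α.take t).sum ≤ (p : ℕ) ∧ (p : ℕ) ≤ (α.take (t + 1)).sum)) :
    J.card ≤ (α.take t).sum + (α.drop (t + 1)).sum := by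
  have hAB := take_succ_sum ht
  have hBn : (α.take (t + 1)).sum ≤ α.sum := sum_take_le_s7 α (t + 1)
  have hdec := sum_decomp ht
  have hsub : J ⊆ Finset.univ.filter
      (fun p : Fin (α.sum + 1) =>
        ¬((α.take t).sum ≤ (p : ℕ) ∧ (p : ℕ) ≤ (α.take (t + 1)).sum)) := by
    intro p hp
    simp only [Finset.mem_filter, Finset.mem_univ, true_and]
    exact hJ1 p hp
  have h1 := Finset.card_le_card hsub
  have h2 := Finset.card_filter_add_card_filter_not
    (s := (Finset.univ : Finset (Fin (α.sum + 1))))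
    (p := fun p => (α.take t).sum ≤ (p : ℕ) ∧ (p : ℕ) ≤ (α.take (t + 1)).sum)
  have h3 : (Finset.univ.filter
      (fun p : Fin (α.sum + 1) =>
        (α.take t).sum ≤ (p : ℕ) ∧ (p : ℕ) ≤ (α.take (t + 1)).sum)).card
      = (α.take (t + 1)).sum + 1 - (α.take t).sum := by
    rw [show (Finset.univ.filter
        (fun p : Fin (α.sum + 1) =>
          (α.take t).sum ≤ (p : ℕ) ∧ (p : ℕ) ≤ (α.take (t + 1)).sum))
        = Finset.univ.filter
        (fun p : Fin (α.sum + 1) =>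
          (α.take t).sum ≤ (p : ℕ) ∧ (p : ℕ) < (α.take (t + 1)).sum + 1) from
      Finset.filter_congr (fun x _ => by omega)]
    exact card_filter_Ico _ _ _ (by omega)
  have h4 : (Finset.univ : Finset (Fin (α.sum + 1))).card = α.sum + 1 := by simp
  omega

/-- the defining property of an order ideal of `F'`. -/
def FpIdeal (α : List ℕ) (t : ℕ) (J : Finset (Fin (α.sum + 1))) : Prop :=
  (∀ p ∈ J, ¬((α.take t).sum ≤ (p : ℕ) ∧ (p : ℕ) ≤ (α.take (t + 1)).sum)) ∧
  ∀ p q : Fin (α.sum + 1),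
    ¬((α.take t).sum ≤ (p : ℕ) ∧ (p : ℕ) ≤ (α.take (t + 1)).sum) →
    ¬((α.take t).sum ≤ (q : ℕ) ∧ (q : ℕ) ≤ (α.take (t + 1)).sum) →
    fenceLe α p q → q ∈ J → p ∈ J

lemma trace_FpIdeal {I : Finset (Fin (α.sum + 1))} (hI : IsFenceIdeal α I) :
    FpIdeal α t (I.filter
      (fun p : Fin (α.sum + 1) => ¬((α.take t).sum ≤ (p : ℕ) ∧ (p : ℕ) ≤ (α.take (t + 1)).sum))) := by
  constructor
  · intro p hp
    exact (Finset.mem_filter.mp hp).2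
  · intro p q hp hq hle hqm
    exact Finset.mem_filter.mpr ⟨hI p q hle (Finset.mem_filter.mp hqm).1, hp⟩

lemma ideal_decomp (hpos : ∀ x ∈ α, 0 < x) (ht : t < α.length)
    {I : Finset (Fin (α.sum + 1))} (hI : IsFenceIdeal α I) :
    I = I.filter
        (fun p : Fin (α.sum + 1) => ¬((α.take t).sum ≤ (p : ℕ) ∧ (p : ℕ) ≤ (α.take (t + 1)).sum))
      ∪ chunk α t (I.card - (I.filter
        (fun p : Fin (α.sum + 1) => ¬((α.take t).sum ≤ (p : ℕ) ∧ (p : ℕ) ≤ (α.take (t + 1)).sum))).card) := by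
  have h2 := Finset.card_filter_add_card_filter_not (s := I)
    (p := fun p => (α.take t).sum ≤ (p : ℕ) ∧ (p : ℕ) ≤ (α.take (t + 1)).sum)
  have hcle : (I.filter (fun p : Fin (α.sum + 1) =>
      (α.take t).sum ≤ (p : ℕ) ∧ (p : ℕ) ≤ (α.take (t + 1)).sum)).card ≤ I.card :=
    Finset.card_le_card (Finset.filter_subset _ _)
  have hcc : (I.filter (fun p : Fin (α.sum + 1) =>
        (α.take t).sum ≤ (p : ℕ) ∧ (p : ℕ) ≤ (α.take (t + 1)).sum)).card
      = I.card - (I.filter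
        (fun p : Fin (α.sum + 1) => ¬((α.take t).sum ≤ (p : ℕ) ∧ (p : ℕ) ≤ (α.take (t + 1)).sum))).card := by
    omega
  conv_lhs => rw [← Finset.filter_union_filter_not_eq
    (fun p : Fin (α.sum + 1) =>
      (α.take t).sum ≤ (p : ℕ) ∧ (p : ℕ) ≤ (α.take (t + 1)).sum) I]
  rw [Finset.union_comm, trace_seg hpos ht hI, hcc]


lemma key_eq (hpos : ∀ x ∈ α, 0 < x) (ht : t < α.length) {k : ℕ}
    (hk1 : (α.take t).sum + (α.drop (t + 1)).sum < k) (hk2 : k ≤ α.get ⟨t, ht⟩) :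
    Nat.card {I : Finset (Fin (α.sum + 1)) // IsFenceIdeal α I ∧ I.card = k}
      = Nat.card {J : Finset (Fin (α.sum + 1)) // FpIdeal α t J} := by
  apply Nat.card_congr
  refine
    { toFun := fun I => ⟨I.1.filter
        (fun p : Fin (α.sum + 1) =>
          ¬((α.take t).sum ≤ (p : ℕ) ∧ (p : ℕ) ≤ (α.take (t + 1)).sum)),
        trace_FpIdeal I.2.1⟩
      invFun := fun J => ⟨J.1 ∪ chunk α t (k - J.1.card),
        build hpos ht J.2.1 J.2.2
          (by have := card_out ht J.2.1; omega) (by omega),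
        by rw [build_card ht J.2.1 (by omega)]
           have := card_out ht J.2.1; omega⟩
      left_inv := ?_
      right_inv := ?_ }
  · intro I
    apply Subtype.ext
    have h := ideal_decomp hpos ht I.2.1
    rw [I.2.2] at h
    exact h.symm
  · intro J
    exact Subtype.ext (build_filter ht J.2.1 (by omega))

lemma key_le (hpos : ∀ x ∈ α, 0 < x) (ht : t < α.length) (k : ℕ) :
    Nat.card {I : Finset (Fin (α.sum + 1)) // IsFenceIdeal α I ∧ I.card = k}
      ≤ Nat.card {J : Finset (Fin (α.sum + 1)) // FpIdeal α t J} := by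
  apply Nat.card_le_card_of_injective (fun I => (⟨I.1.filter
      (fun p : Fin (α.sum + 1) =>
        ¬((α.take t).sum ≤ (p : ℕ) ∧ (p : ℕ) ≤ (α.take (t + 1)).sum)),
      trace_FpIdeal I.2.1⟩ : {J : Finset (Fin (α.sum + 1)) // FpIdeal α t J}))
  intro I1 I2 h
  have h' := congrArg Subtype.val h
  simp only at h'
  apply Subtype.ext
  calc I1.1 = _ := ideal_decomp hpos ht I1.2.1
    _ = _ := by rw [h', I1.2.2, I2.2.2]
    _ = I2.1 := (ideal_decomp hpos ht I2.2.1).symm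

end FenceAux

/-- If segment `t` is longer than the sum of the lengths of all the other
segments, then the maximum size of a rank of `L(α)` equals the number `ℓ` of
order ideals of the poset `F'` obtained by deleting segment `t` from `F(α)`,
and every rank `k` with `m+1 ≤ k ≤ n-m-1` has exactly `ℓ` elements, where
`m = #F'` and `n = #F(α)`.  (Segment `t`, 0-indexed, occupies positions
`(α.take t).sum` through `(α.take (t+1)).sum`.) -/
theorem fence_maxRank_of_long_segment (α : List ℕ) (hpos : ∀ x ∈ α, 0 < x)
    (t : ℕ) (ht : t < α.length)
    (hbig : (α.take t).sum + (α.drop (t + 1)).sum < α.get ⟨t, ht⟩) :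
    let n := α.sum + 1
    let m := (α.take t).sum + (α.drop (t + 1)).sum
    let seg : Set ℕ := Set.Icc ((α.take t).sum) ((α.take (t + 1)).sum)
    let ℓ := Nat.card {I : Finset (Fin (α.sum + 1)) //
      (∀ p ∈ I, (p : ℕ) ∉ seg) ∧
      ∀ p q : Fin (α.sum + 1), (p : ℕ) ∉ seg → (q : ℕ) ∉ seg →
        fenceLe α p q → q ∈ I → p ∈ I}
    (∀ k, fenceRk α k ≤ ℓ) ∧ (∃ k, fenceRk α k = ℓ) ∧
      ∀ k, m + 1 ≤ k → k ≤ n - m - 1 → fenceRk α k = ℓ := by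
  intro n m seg ℓ
  have hn : n = α.sum + 1 := rfl
  have hm : m = (α.take t).sum + (α.drop (t + 1)).sum := rfl
  have hdec := FenceAux.sum_decomp ht
  have hℓ : ℓ = Nat.card {J : Finset (Fin (α.sum + 1)) // FenceAux.FpIdeal α t J} := by
    apply Nat.card_congr
    apply Equiv.subtypeEquivRight
    intro I
    simp only [seg, Set.mem_Icc, FenceAux.FpIdeal]
  refine ⟨?_, ?_, ?_⟩
  · intro k
    rw [hℓ]
    exact FenceAux.key_le hpos ht k
  · refine ⟨m + 1, ?_⟩
    rw [hℓ]
    exact FenceAux.key_eq hpos ht (by omega) (by omega)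
  · intro k hk1 hk2
    rw [hℓ]
    exact FenceAux.key_eq hpos ht (by omega) (by omega)
end

section
/- Let α = (α₁,…,α_s) be a composition such that α_t > Σ_{i≠t} α_i for some index t. Then the rank sequence of the lattice L(α) of lower order ideals of the fence F(α) is unimodal. -/
open Polynomial

namespace FenceUni
variable (α : List ℕ)

def s (j : ℕ) : ℕ := (α.take j).sum

lemma sum_take_le (l : List ℕ) (j : ℕ) : (l.take j).sum ≤ l.sum := by
  calc (l.take j).sum ≤ (l.take j).sum + (l.drop j).sum := Nat.le_add_right _ _
    _ = l.sum := by rw [← List.sum_append, List.take_append_drop]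

lemma s_mono {j k : ℕ} (h : j ≤ k) : s α j ≤ s α k := by
  have : α.take j = (α.take k).take j := by rw [List.take_take, min_eq_left h]
  rw [s, this]
  exact sum_take_le _ _

lemma s_le_sum (j : ℕ) : s α j ≤ α.sum := sum_take_le _ _

lemma s_succ {j : ℕ} (hj : j < α.length) :
    s α (j + 1) = s α j + α.get ⟨j, hj⟩ := by
  rw [s, s, List.take_succ, List.sum_append, List.getElem?_eq_getElem hj]
  simp

lemma s_lt (hpos : ∀ x ∈ α, 0 < x) {j k : ℕ} (hjk : j < k) (hk : k ≤ α.length) :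
    s α j < s α k := by
  have hj : j < α.length := lt_of_lt_of_le hjk hk
  have h1 : 0 < α.get ⟨j, hj⟩ := hpos _ (by simpa using List.getElem_mem (l := α) (n := j) hj)
  have h2 := s_succ α hj
  have h3 := s_mono α (show j + 1 ≤ k from hjk)
  omega

/-- length of segment `t`. -/
def wd (t : ℕ) : ℕ := s α (t + 1) - s α t

/-- position of height `i` within segment `t`. -/
def ev (t i : ℕ) : ℕ := if t % 2 = 0 then s α t + i else s α (t + 1) - i

/-- height of position `x` within segment `t`. -/
def hv (t x : ℕ) : ℕ := if t % 2 = 0 then x - s α t else s α (t + 1) - x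

variable {α}

lemma s_t_le (t : ℕ) : s α t ≤ s α (t + 1) := s_mono α (Nat.le_succ t)

lemma ev_bounds {t i : ℕ} (hi : i ≤ wd α t) :
    s α t ≤ ev α t i ∧ ev α t i ≤ s α (t + 1) := by
  have h := s_t_le (α := α) t
  unfold ev wd at *
  split <;> omega

lemma ev_hv {t x : ℕ} (h1 : s α t ≤ x) (h2 : x ≤ s α (t + 1)) :
    ev α t (hv α t x) = x ∧ hv α t x ≤ wd α t := by
  unfold ev hv wd
  split <;> omega

lemma hv_ev {t i : ℕ} (hi : i ≤ wd α t) : hv α t (ev α t i) = i := by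
  have h := s_t_le (α := α) t
  unfold ev hv wd at *
  split <;> omega

lemma ev_inj {t i i' : ℕ} (hi : i ≤ wd α t) (hi' : i' ≤ wd α t)
    (h : ev α t i = ev α t i') : i = i' := by
  have h2 := s_t_le (α := α) t
  unfold ev wd at *
  split at h <;> omega

lemma fenceLe_ev {t : ℕ} (ht : t < α.length) {i i' : ℕ} (h : i ≤ i')
    (hi' : i' ≤ wd α t) : fenceLe α (ev α t i) (ev α t i') := by
  refine Or.inr ⟨t, ht, ?_⟩
  have h2 := s_t_le (α := α) t
  show if t % 2 = 0 then s α t ≤ _ ∧ _ ∧ _ ≤ s α (t+1) else s α t ≤ _ ∧ _ ∧ _ ≤ s α (t+1)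
  unfold ev wd at *
  split <;> [skip; skip] <;> refine ⟨?_, ?_, ?_⟩ <;> omega

lemma seg_unique {t j x : ℕ} (hj : j < α.length) (h1 : s α t < x)
    (h2 : x < s α (t + 1)) (h3 : s α j ≤ x) (h4 : x ≤ s α (j + 1)) : j = t := by
  rcases lt_trichotomy j t with h | h | h
  · have := s_mono α (show j + 1 ≤ t from h)
    omega
  · exact h
  · have := s_mono α (show t + 1 ≤ j from h)
    omega

lemma le_into_interior {t p q : ℕ} (hpq : fenceLe α p q) (h1 : s α t < q)
    (h2 : q < s α (t + 1)) :
    s α t ≤ p ∧ p ≤ s α (t + 1) ∧ hv α t p ≤ hv α t q := by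
  rcases hpq with h | ⟨j, hj, cond⟩
  · subst h; unfold hv; split <;> omega
  · have e1 : (List.take j α).sum = s α j := rfl
    have e2 : (List.take (j + 1) α).sum = s α (j + 1) := rfl
    rw [e1, e2] at cond
    have hjt : j = t := by
      by_cases hj2 : j % 2 = 0
      · rw [if_pos hj2] at cond
        exact seg_unique hj h1 h2 (le_trans cond.1 cond.2.1) cond.2.2
      · rw [if_neg hj2] at cond
        exact seg_unique hj h1 h2 cond.1 (le_trans cond.2.1 cond.2.2)
    subst hjt
    by_cases hj2 : j % 2 = 0
    · rw [if_pos hj2] at cond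
      unfold hv
      rw [if_pos hj2, if_pos hj2]
      omega
    · rw [if_neg hj2] at cond
      unfold hv
      rw [if_neg hj2, if_neg hj2]
      omega

lemma le_from_interior {t p q : ℕ} (hpq : fenceLe α p q) (h1 : s α t < p)
    (h2 : p < s α (t + 1)) :
    s α t ≤ q ∧ q ≤ s α (t + 1) ∧ hv α t p ≤ hv α t q := by
  rcases hpq with h | ⟨j, hj, cond⟩
  · subst h; unfold hv; split <;> omega
  · have e1 : (List.take j α).sum = s α j := rfl
    have e2 : (List.take (j + 1) α).sum = s α (j + 1) := rfl
    rw [e1, e2] at cond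
    have hjt : j = t := by
      by_cases hj2 : j % 2 = 0
      · rw [if_pos hj2] at cond
        exact seg_unique hj h1 h2 cond.1 (le_trans cond.2.1 cond.2.2)
      · rw [if_neg hj2] at cond
        exact seg_unique hj h1 h2 (le_trans cond.1 cond.2.1) cond.2.2
    subst hjt
    by_cases hj2 : j % 2 = 0
    · rw [if_pos hj2] at cond
      unfold hv
      rw [if_pos hj2, if_pos hj2]
      omega
    · rw [if_neg hj2] at cond
      unfold hv
      rw [if_neg hj2, if_neg hj2]
      omega

lemma lo_min (hpos : ∀ x ∈ α, 0 < x) {t : ℕ} (ht : t < α.length) {p : ℕ}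
    (hq : fenceLe α p (ev α t 0)) : p = ev α t 0 := by
  have hst : s α t < s α (t + 1) := s_lt α hpos (Nat.lt_succ_self t) ht
  have htl : t ≤ α.length := le_of_lt ht
  rcases hq with h | ⟨j, hj, cond⟩
  · exact h
  · have e1 : (List.take j α).sum = s α j := rfl
    have e2 : (List.take (j + 1) α).sum = s α (j + 1) := rfl
    rw [e1, e2] at cond
    by_cases ht2 : t % 2 = 0
    · rw [ev, if_pos ht2] at cond ⊢
      by_cases hj2 : j % 2 = 0
      · rw [if_pos hj2] at cond
        have hjt : t ≤ j := by
          by_contra hcon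
          have : s α (j + 1) < s α t := s_lt α hpos (by omega) (by omega)
          omega
        have := s_mono α hjt
        omega
      · rw [if_neg hj2] at cond
        have hjt : j + 1 ≤ t := by
          by_contra hcon
          have : s α (t + 1) ≤ s α j := s_mono α (by omega)
          omega
        have := s_mono α hjt
        omega
    · rw [ev, if_neg ht2] at cond ⊢
      by_cases hj2 : j % 2 = 0
      · rw [if_pos hj2] at cond
        have hjt : t + 1 ≤ j := by
          by_contra hcon
          have : s α (j + 1) ≤ s α t := s_mono α (by omega)
          omega
        have := s_mono α hjt
        omega
      · rw [if_neg hj2] at cond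
        have hjt : j + 1 ≤ t + 1 := by
          by_contra hcon
          have : s α (t + 1) < s α j := s_lt α hpos (by omega) (by omega)
          omega
        have := s_mono α hjt
        omega

lemma hi_max (hpos : ∀ x ∈ α, 0 < x) {t : ℕ} (ht : t < α.length) {q : ℕ}
    (hq : fenceLe α (ev α t (wd α t)) q) : q = ev α t (wd α t) := by
  have hst : s α t < s α (t + 1) := s_lt α hpos (Nat.lt_succ_self t) ht
  have htl : t ≤ α.length := le_of_lt ht
  have hwd : s α t + wd α t = s α (t + 1) := by unfold wd; omega
  rcases hq with h | ⟨j, hj, cond⟩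
  · exact h.symm
  · have e1 : (List.take j α).sum = s α j := rfl
    have e2 : (List.take (j + 1) α).sum = s α (j + 1) := rfl
    rw [e1, e2] at cond
    by_cases ht2 : t % 2 = 0
    · rw [ev, if_pos ht2] at cond ⊢
      by_cases hj2 : j % 2 = 0
      · rw [if_pos hj2] at cond
        have hjt : j ≤ t := by
          by_contra hcon
          have : s α (t + 1) < s α j := s_lt α hpos (by omega) (by omega)
          omega
        have := s_mono α (show j + 1 ≤ t + 1 by omega)
        omega
      · rw [if_neg hj2] at cond
        have hjt : t + 1 ≤ j := by
          by_contra hcon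
          have : s α (j + 1) ≤ s α t := s_mono α (by omega)
          omega
        have := s_mono α hjt
        omega
    · rw [ev, if_neg ht2] at cond ⊢
      by_cases hj2 : j % 2 = 0
      · rw [if_pos hj2] at cond
        have hjt : j + 1 ≤ t := by
          by_contra hcon
          have : s α (t + 1) ≤ s α j := s_mono α (by omega)
          omega
        have := s_mono α hjt
        omega
      · rw [if_neg hj2] at cond
        have hjt : t ≤ j := by
          by_contra hcon
          have : s α (j + 1) < s α t := s_lt α hpos (by omega) (by omega)
          omega
        have := s_mono α hjt
        omega

def evF (α : List ℕ) (t i : ℕ) : Fin (α.sum + 1) :=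
  ⟨min (ev α t i) α.sum, by omega⟩

lemma evF_coe {t i : ℕ} (hi : i ≤ wd α t) : ((evF α t i : Fin (α.sum + 1)) : ℕ) = ev α t i := by
  have h1 := (ev_bounds hi).2
  have h2 := s_le_sum α (t + 1)
  simp only [evF]
  omega

lemma evF_inj {t i i' : ℕ} (hi : i ≤ wd α t) (hi' : i' ≤ wd α t)
    (h : evF α t i = evF α t i') : i = i' := by
  apply ev_inj hi hi'
  rw [← evF_coe hi, ← evF_coe hi', h]

def SI (α : List ℕ) (t : ℕ) (I : Finset (Fin (α.sum + 1))) : Finset ℕ :=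
  (Finset.Icc 1 (wd α t - 1)).filter (fun i => evF α t i ∈ I)

def cI (α : List ℕ) (t : ℕ) (I : Finset (Fin (α.sum + 1))) : ℕ := (SI α t I).card

variable {t : ℕ} {I : Finset (Fin (α.sum + 1))}

lemma mem_of_le_mem (hI : IsFenceIdeal α I) (ht : t < α.length) {i i' : ℕ}
    (h1 : i ≤ i') (h2 : i' ≤ wd α t) (hm : evF α t i' ∈ I) : evF α t i ∈ I := by
  refine hI _ _ ?_ hm
  rw [evF_coe (le_trans h1 h2), evF_coe h2]
  exact fenceLe_ev ht h1 h2

lemma mem_iff_le_cI (hI : IsFenceIdeal α I) (ht : t < α.length) {i : ℕ}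
    (h1 : 1 ≤ i) (h2 : i ≤ wd α t - 1) : evF α t i ∈ I ↔ i ≤ cI α t I := by
  constructor
  · intro hm
    have hsub : Finset.Icc 1 i ⊆ SI α t I := by
      intro i'' hi''
      rw [Finset.mem_Icc] at hi''
      rw [SI, Finset.mem_filter, Finset.mem_Icc]
      exact ⟨⟨hi''.1, le_trans hi''.2 h2⟩,
        mem_of_le_mem hI ht hi''.2 (by omega) hm⟩
    have := Finset.card_le_card hsub
    rw [Nat.card_Icc] at this
    rw [cI]
    omega
  · intro hle
    by_contra hm
    have hsub : SI α t I ⊆ Finset.Icc 1 (i - 1) := by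
      intro j hj
      rw [SI, Finset.mem_filter, Finset.mem_Icc] at hj
      rw [Finset.mem_Icc]
      rcases Nat.lt_or_ge j i with h | h
      · omega
      · exact absurd (mem_of_le_mem hI ht h (by omega) hj.2) hm
    have := Finset.card_le_card hsub
    rw [Nat.card_Icc] at this
    rw [cI] at hle
    omega

lemma lo_mem (hI : IsFenceIdeal α I) (ht : t < α.length)
    (hc : 1 ≤ cI α t I) : evF α t 0 ∈ I := by
  obtain ⟨i, hi⟩ := Finset.card_pos.mp hc
  rw [SI, Finset.mem_filter, Finset.mem_Icc] at hi
  exact mem_of_le_mem hI ht (Nat.zero_le i) (by omega) hi.2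

lemma cI_full (hI : IsFenceIdeal α I) (ht : t < α.length)
    (hm : evF α t (wd α t) ∈ I) : cI α t I = wd α t - 1 := by
  have hS : SI α t I = Finset.Icc 1 (wd α t - 1) := by
    rw [SI]
    apply Finset.filter_true_of_mem
    intro i hi
    rw [Finset.mem_Icc] at hi
    exact mem_of_le_mem hI ht (by omega) le_rfl hm
  rw [cI, hS, Nat.card_Icc]
  omega

lemma cI_le (ht : t < α.length) : cI α t I ≤ wd α t - 1 := by
  have := Finset.card_le_card (Finset.filter_subset (fun i => evF α t i ∈ I)
    (Finset.Icc 1 (wd α t - 1)))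
  rw [Nat.card_Icc] at this
  rw [cI, SI]
  omega

lemma cI_eq (ht : t < α.length) :
    cI α t I = (I.filter (fun p : Fin (α.sum + 1) => s α t < (p : ℕ) ∧ (p : ℕ) < s α (t + 1))).card := by
  have hab : s α t + wd α t = s α (t + 1) := by
    have := s_t_le (α := α) t; unfold wd; omega
  refine Finset.card_bij (fun i _ => evF α t i) ?_ ?_ ?_
  · intro i hi
    rw [SI, Finset.mem_filter, Finset.mem_Icc] at hi
    rw [Finset.mem_filter]
    refine ⟨hi.2, ?_⟩
    rw [evF_coe (by omega)]
    unfold ev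
    split <;> omega
  · intro i hi i' hi' h
    rw [SI, Finset.mem_filter, Finset.mem_Icc] at hi hi'
    exact evF_inj (by omega) (by omega) h
  · intro p hp
    rw [Finset.mem_filter] at hp
    obtain ⟨he, hle⟩ := ev_hv (le_of_lt hp.2.1) (le_of_lt hp.2.2)
    have hh1 : 1 ≤ hv α t (p : ℕ) ∧ hv α t (p : ℕ) ≤ wd α t - 1 := by
      have := hp.2.1; have := hp.2.2
      unfold hv wd at *
      split <;> omega
    refine ⟨hv α t (p : ℕ), ?_, ?_⟩
    · rw [SI, Finset.mem_filter, Finset.mem_Icc]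
      refine ⟨⟨hh1.1, hh1.2⟩, ?_⟩
      have : evF α t (hv α t (p : ℕ)) = p := Fin.ext (by rw [evF_coe hle, he])
      rw [this]
      exact hp.1
    · exact Fin.ext (by rw [evF_coe hle, he])

lemma interior_count (ht : t < α.length) :
    (Finset.univ.filter
      (fun p : Fin (α.sum + 1) => s α t < (p : ℕ) ∧ (p : ℕ) < s α (t + 1))).card
      = wd α t - 1 := by
  have hsum := s_le_sum α (t + 1)
  have hab := s_t_le (α := α) t
  have : (Finset.univ.filter
      (fun p : Fin (α.sum + 1) => s α t < (p : ℕ) ∧ (p : ℕ) < s α (t + 1))).card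
      = (Finset.Ioo (s α t) (s α (t + 1))).card := by
    refine Finset.card_bij (fun p _ => (p : ℕ)) ?_ ?_ ?_
    · intro p hp
      rw [Finset.mem_filter] at hp
      rw [Finset.mem_Ioo]
      exact hp.2
    · intro p _ p' _ h
      exact Fin.ext h
    · intro x hx
      rw [Finset.mem_Ioo] at hx
      refine ⟨⟨x, by omega⟩, ?_, rfl⟩
      rw [Finset.mem_filter]
      exact ⟨Finset.mem_univ _, hx.1, hx.2⟩
  rw [this, Nat.card_Ioo]
  unfold wd
  omega

lemma evF_hi_not_interior (ht : t < α.length) :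
    ¬ (s α t < ((evF α t (wd α t) : Fin (α.sum + 1)) : ℕ) ∧
       ((evF α t (wd α t) : Fin (α.sum + 1)) : ℕ) < s α (t + 1)) := by
  rw [evF_coe le_rfl]
  have := s_t_le (α := α) t
  unfold ev wd
  split <;> omega

lemma evF_lo_not_interior (ht : t < α.length) :
    ¬ (s α t < ((evF α t 0 : Fin (α.sum + 1)) : ℕ) ∧
       ((evF α t 0 : Fin (α.sum + 1)) : ℕ) < s α (t + 1)) := by
  rw [evF_coe (Nat.zero_le _)]
  have := s_t_le (α := α) t
  unfold ev
  split <;> omega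

lemma count_bound (ht : t < α.length) (hni : evF α t (wd α t) ∉ I) :
    I.card ≤ cI α t I + (α.sum + 1 - wd α t) := by
  classical
  set P := fun p : Fin (α.sum + 1) => s α t < (p : ℕ) ∧ (p : ℕ) < s α (t + 1) with hP
  have hsplit := Finset.card_filter_add_card_filter_not (s := I) (p := P)
  have husplit := Finset.card_filter_add_card_filter_not
    (s := (Finset.univ : Finset (Fin (α.sum + 1)))) (p := P)
  have h1 : (I.filter P).card = cI α t I := (cI_eq ht).symm
  have h2 : I.filter (fun p => ¬ P p) ⊆
      (Finset.univ.filter (fun p => ¬ P p)).erase (evF α t (wd α t)) := by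
    intro p hp
    rw [Finset.mem_filter] at hp
    rw [Finset.mem_erase, Finset.mem_filter]
    refine ⟨?_, Finset.mem_univ _, hp.2⟩
    rintro rfl
    exact hni hp.1
  have h3 := Finset.card_le_card h2
  have h4 : evF α t (wd α t) ∈ Finset.univ.filter (fun p => ¬ P p) := by
    rw [Finset.mem_filter]
    exact ⟨Finset.mem_univ _, evF_hi_not_interior ht⟩
  have h5 := Finset.card_erase_of_mem h4
  have h6 : (Finset.univ : Finset (Fin (α.sum + 1))).card = α.sum + 1 := by
    simp
  have h7 : (Finset.univ.filter P).card = wd α t - 1 := interior_count ht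
  have hwle : wd α t ≤ α.sum := le_trans (Nat.sub_le _ _) (s_le_sum α (t + 1))
  omega

lemma count_lower (ht : t < α.length) (hlo : evF α t 0 ∈ I) :
    cI α t I + 1 ≤ I.card := by
  classical
  set P := fun p : Fin (α.sum + 1) => s α t < (p : ℕ) ∧ (p : ℕ) < s α (t + 1) with hP
  have hsplit := Finset.card_filter_add_card_filter_not (s := I) (p := P)
  have h1 : (I.filter P).card = cI α t I := (cI_eq ht).symm
  have h2 : 0 < (I.filter (fun p => ¬ P p)).card := by
    rw [Finset.card_pos]
    exact ⟨evF α t 0, by rw [Finset.mem_filter]; exact ⟨hlo, evF_lo_not_interior ht⟩⟩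
  omega

lemma SI_insert_int {i0 : ℕ} (h1 : 1 ≤ i0) (h2 : i0 ≤ wd α t - 1) :
    SI α t (insert (evF α t i0) I) = insert i0 (SI α t I) := by
  ext j
  simp only [SI, Finset.mem_filter, Finset.mem_Icc, Finset.mem_insert]
  constructor
  · rintro ⟨hj, h | h⟩
    · exact Or.inl (evF_inj (by omega) (by omega) h)
    · exact Or.inr ⟨hj, h⟩
  · rintro (rfl | ⟨hj, h⟩)
    · exact ⟨⟨h1, h2⟩, Or.inl rfl⟩
    · exact ⟨hj, Or.inr h⟩

lemma SI_insert_lo :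
    SI α t (insert (evF α t 0) I) = SI α t I := by
  ext j
  simp only [SI, Finset.mem_filter, Finset.mem_Icc, Finset.mem_insert]
  constructor
  · rintro ⟨hj, h | h⟩
    · have := evF_inj (by omega) (Nat.zero_le _) h
      omega
    · exact ⟨hj, h⟩
  · rintro ⟨hj, h⟩
    exact ⟨hj, Or.inr h⟩

lemma SI_erase_hi :
    SI α t (I.erase (evF α t (wd α t))) = SI α t I := by
  ext j
  simp only [SI, Finset.mem_filter, Finset.mem_Icc, Finset.mem_erase]
  constructor
  · rintro ⟨hj, _, h⟩
    exact ⟨hj, h⟩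
  · rintro ⟨hj, h⟩
    refine ⟨hj, ?_, h⟩
    intro heq
    have := evF_inj (by omega) le_rfl heq
    omega

lemma SI_erase_int {i0 : ℕ} (h1 : 1 ≤ i0) (h2 : i0 ≤ wd α t - 1) :
    SI α t (I.erase (evF α t i0)) = (SI α t I).erase i0 := by
  ext j
  simp only [SI, Finset.mem_filter, Finset.mem_Icc, Finset.mem_erase]
  constructor
  · rintro ⟨hj, hne, h⟩
    refine ⟨?_, hj, h⟩
    intro heq
    exact hne (by rw [heq])
  · rintro ⟨hne, hj, h⟩
    refine ⟨hj, ?_, h⟩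
    intro heq
    exact hne (evF_inj (by omega) (by omega) heq)

lemma ev_interior {i : ℕ} (h1 : 1 ≤ i) (h2 : i ≤ wd α t - 1) :
    s α t < ev α t i ∧ ev α t i < s α (t + 1) := by
  have := s_t_le (α := α) t
  unfold ev wd at *
  split <;> omega

variable (α t) in
def upF (I : Finset (Fin (α.sum + 1))) : Finset (Fin (α.sum + 1)) :=
  if evF α t 0 ∈ I then insert (evF α t (cI α t I + 1)) I else insert (evF α t 0) I

variable (α t) in
def recF (J : Finset (Fin (α.sum + 1))) : Finset (Fin (α.sum + 1)) :=
  if cI α t J = 0 then J.erase (evF α t 0) else J.erase (evF α t (cI α t J))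

variable (α t) in
def dnF (I : Finset (Fin (α.sum + 1))) : Finset (Fin (α.sum + 1)) :=
  if evF α t (wd α t) ∈ I then I.erase (evF α t (wd α t))
  else I.erase (evF α t (cI α t I))

variable (α t) in
def rec2F (J : Finset (Fin (α.sum + 1))) : Finset (Fin (α.sum + 1)) :=
  if cI α t J = wd α t - 1 then insert (evF α t (wd α t)) J
  else insert (evF α t (cI α t J + 1)) J

lemma up_spec (hpos : ∀ x ∈ α, 0 < x) (ht : t < α.length)
    (hbig2 : α.sum + 1 ≤ 2 * wd α t) {k : ℕ} (hI : IsFenceIdeal α I)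
    (hcard : I.card = k) (hk : k + 1 ≤ α.sum + 1 - wd α t) :
    IsFenceIdeal α (upF α t I) ∧ (upF α t I).card = k + 1 ∧
      recF α t (upF α t I) = I := by
  have hwle : wd α t ≤ α.sum := le_trans (Nat.sub_le _ _) (s_le_sum α (t + 1))
  by_cases hlo : evF α t 0 ∈ I
  · -- insert the next interior element
    set c := cI α t I with hc
    have hck : c + 1 ≤ k := by
      have := count_lower ht hlo
      omega
    have hA1 : c + 1 ≤ wd α t - 1 := by omega
    have hnm : evF α t (c + 1) ∉ I := by
      rw [mem_iff_le_cI hI ht (by omega) hA1]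
      omega
    have hupF : upF α t I = insert (evF α t (c + 1)) I := by rw [upF, if_pos hlo]
    refine ⟨?_, ?_, ?_⟩
    · -- ideal
      rw [hupF]
      intro p q hle hq
      rw [Finset.mem_insert] at hq ⊢
      rcases hq with hq | hq
      · subst hq
        rw [evF_coe (show c + 1 ≤ wd α t by omega)] at hle
        have hint := ev_interior (show 1 ≤ c + 1 by omega) hA1
        obtain ⟨hb1, hb2, hhv⟩ := le_into_interior hle hint.1 hint.2
        rw [hv_ev (show c + 1 ≤ wd α t by omega)] at hhv
        obtain ⟨hep, hplew⟩ := ev_hv hb1 hb2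
        have hpe : p = evF α t (hv α t (p : ℕ)) :=
          Fin.ext (by rw [evF_coe hplew, hep])
        rcases Nat.lt_or_ge (hv α t (p : ℕ)) (c + 1) with hlt | hge
        · rcases Nat.eq_zero_or_pos (hv α t (p : ℕ)) with h0 | h0
          · rw [hpe, h0]
            exact Or.inr hlo
          · refine Or.inr ?_
            rw [hpe]
            rw [mem_iff_le_cI hI ht h0 (by omega)]
            omega
        · have : hv α t (p : ℕ) = c + 1 := by omega
          rw [hpe, this]
          exact Or.inl rfl
      · exact Or.inr (hI p q hle hq)
    · rw [hupF, Finset.card_insert_of_notMem hnm, hcard]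
    · have hcnew : cI α t (upF α t I) = c + 1 := by
        rw [hupF, cI, SI_insert_int (show 1 ≤ c + 1 by omega) hA1,
          Finset.card_insert_of_notMem, hc, cI]
        intro hmem
        rw [SI, Finset.mem_filter] at hmem
        exact hnm hmem.2
      rw [recF, hcnew, if_neg (by omega), hupF]
      exact Finset.erase_insert hnm
  · -- insert the bottom of the segment
    have hupF : upF α t I = insert (evF α t 0) I := by rw [upF, if_neg hlo]
    have hc0 : cI α t I = 0 := by
      by_contra h
      exact hlo (lo_mem hI ht (by omega))
    refine ⟨?_, ?_, ?_⟩
    · rw [hupF]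
      intro p q hle hq
      rw [Finset.mem_insert] at hq ⊢
      rcases hq with hq | hq
      · subst hq
        rw [evF_coe (Nat.zero_le _)] at hle
        have := lo_min hpos ht hle
        exact Or.inl (Fin.ext (by rw [evF_coe (Nat.zero_le _), this]))
      · exact Or.inr (hI p q hle hq)
    · rw [hupF, Finset.card_insert_of_notMem hlo, hcard]
    · have hcnew : cI α t (upF α t I) = 0 := by
        rw [hupF, cI, SI_insert_lo, ← cI, hc0]
      rw [recF, hcnew, if_pos rfl, hupF]
      exact Finset.erase_insert hlo

lemma dn_spec (hpos : ∀ x ∈ α, 0 < x) (ht : t < α.length) {k : ℕ}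
    (hI : IsFenceIdeal α I) (hcard : I.card = k + 1)
    (hk : α.sum + 1 - wd α t ≤ k) :
    IsFenceIdeal α (dnF α t I) ∧ (dnF α t I).card = k ∧
      rec2F α t (dnF α t I) = I := by
  have hwle : wd α t ≤ α.sum := le_trans (Nat.sub_le _ _) (s_le_sum α (t + 1))
  by_cases hhi : evF α t (wd α t) ∈ I
  · have hdnF : dnF α t I = I.erase (evF α t (wd α t)) := by rw [dnF, if_pos hhi]
    refine ⟨?_, ?_, ?_⟩
    · rw [hdnF]
      intro p q hle hq
      rw [Finset.mem_erase] at hq ⊢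
      refine ⟨?_, hI p q hle hq.2⟩
      intro hpe
      subst hpe
      rw [evF_coe le_rfl] at hle
      have := hi_max hpos ht hle
      exact hq.1 (Fin.ext (by rw [evF_coe le_rfl, this]))
    · rw [hdnF, Finset.card_erase_of_mem hhi, hcard]
      omega
    · have hcfull : cI α t I = wd α t - 1 := cI_full hI ht hhi
      have hcnew : cI α t (dnF α t I) = wd α t - 1 := by
        rw [hdnF, cI, SI_erase_hi, ← cI, hcfull]
      rw [rec2F, hcnew, if_pos rfl, hdnF]
      exact Finset.insert_erase hhi
  · set c := cI α t I with hc
    have hc1 : 1 ≤ c := by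
      have := count_bound ht hhi
      omega
    have hcw : c ≤ wd α t - 1 := cI_le ht
    have hmem : evF α t c ∈ I := by
      rw [mem_iff_le_cI hI ht hc1 hcw]
    have hdnF : dnF α t I = I.erase (evF α t c) := by rw [dnF, if_neg hhi]
    refine ⟨?_, ?_, ?_⟩
    · rw [hdnF]
      intro p q hle hq
      rw [Finset.mem_erase] at hq ⊢
      refine ⟨?_, hI p q hle hq.2⟩
      intro hpe
      subst hpe
      rw [evF_coe (show c ≤ wd α t by omega)] at hle
      have hint := ev_interior hc1 hcw
      obtain ⟨hb1, hb2, hhv⟩ := le_from_interior hle hint.1 hint.2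
      rw [hv_ev (show c ≤ wd α t by omega)] at hhv
      obtain ⟨heq, hqlew⟩ := ev_hv hb1 hb2
      have hqe : q = evF α t (hv α t (q : ℕ)) :=
        Fin.ext (by rw [evF_coe hqlew, heq])
      rcases Nat.lt_or_ge (hv α t (q : ℕ)) (wd α t) with hlt | hge
      · have : hv α t (q : ℕ) ≤ c := by
          rw [← mem_iff_le_cI hI ht (by omega) (by omega), ← hqe]
          exact hq.2
        exact hq.1 (by rw [hqe]; congr 1; omega)
      · have : hv α t (q : ℕ) = wd α t := by omega
        rw [this] at hqe
        rw [hqe] at hq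
        exact hhi hq.2
    · rw [hdnF, Finset.card_erase_of_mem hmem, hcard]
      omega
    · have hcnew : cI α t (dnF α t I) = c - 1 := by
        rw [hdnF, cI, SI_erase_int hc1 hcw, Finset.card_erase_of_mem, hc, cI]
        rw [SI, Finset.mem_filter, Finset.mem_Icc]
        exact ⟨⟨hc1, hcw⟩, hmem⟩
      have hplus : c - 1 + 1 = c := by omega
      rw [rec2F, hcnew, if_neg (by omega), hplus, hdnF]
      exact Finset.insert_erase hmem

lemma step_up_card (hpos : ∀ x ∈ α, 0 < x) (ht : t < α.length)
    (hbig2 : α.sum + 1 ≤ 2 * wd α t) {k : ℕ}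
    (hk : k + 1 ≤ α.sum + 1 - wd α t) :
    Nat.card {I : Finset (Fin (α.sum + 1)) // IsFenceIdeal α I ∧ I.card = k} ≤
      Nat.card {I : Finset (Fin (α.sum + 1)) // IsFenceIdeal α I ∧ I.card = k + 1} := by
  refine Nat.card_le_card_of_injective
    (fun x => ⟨upF α t x.1, (up_spec hpos ht hbig2 x.2.1 x.2.2 hk).1,
      (up_spec hpos ht hbig2 x.2.1 x.2.2 hk).2.1⟩) ?_
  intro x y h
  have h' : upF α t x.1 = upF α t y.1 := congrArg Subtype.val h
  have hx := (up_spec hpos ht hbig2 x.2.1 x.2.2 hk).2.2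
  have hy := (up_spec hpos ht hbig2 y.2.1 y.2.2 hk).2.2
  exact Subtype.ext (by rw [← hx, ← hy, h'])

lemma step_dn_card (hpos : ∀ x ∈ α, 0 < x) (ht : t < α.length) {k : ℕ}
    (hk : α.sum + 1 - wd α t ≤ k) :
    Nat.card {I : Finset (Fin (α.sum + 1)) // IsFenceIdeal α I ∧ I.card = k + 1} ≤
      Nat.card {I : Finset (Fin (α.sum + 1)) // IsFenceIdeal α I ∧ I.card = k} := by
  refine Nat.card_le_card_of_injective
    (fun x => ⟨dnF α t x.1, (dn_spec hpos ht x.2.1 x.2.2 hk).1,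
      (dn_spec hpos ht x.2.1 x.2.2 hk).2.1⟩) ?_
  intro x y h
  have h' : dnF α t x.1 = dnF α t y.1 := congrArg Subtype.val h
  have hx := (dn_spec hpos ht x.2.1 x.2.2 hk).2.2
  have hy := (dn_spec hpos ht y.2.1 y.2.2 hk).2.2
  exact Subtype.ext (by rw [← hx, ← hy, h'])

lemma unimodal_of_steps {r : ℕ → ℕ} {m : ℕ}
    (hup : ∀ k, k + 1 ≤ m → r k ≤ r (k + 1))
    (hdn : ∀ k, m ≤ k → r (k + 1) ≤ r k) :
    ∃ m : ℕ, ∀ i j : ℕ, i ≤ j → (j ≤ m → r i ≤ r j) ∧ (m ≤ i → r j ≤ r i) := by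
  refine ⟨m, fun i j hij => ⟨?_, ?_⟩⟩
  · intro hjm
    induction j, hij using Nat.le_induction with
    | base => exact le_rfl
    | succ j hij ih => exact le_trans (ih (by omega)) (hup j hjm)
  · intro hmi
    induction j, hij using Nat.le_induction with
    | base => exact le_rfl
    | succ j hij ih => exact le_trans (hdn j (le_trans hmi hij)) ih

end FenceUni

/-- If some segment of `F(α)` is longer than the sum of the lengths of all the
other segments, then the rank sequence of `L(α)` is unimodal. -/
theorem fence_rank_unimodal_of_long_segment (α : List ℕ) (hpos : ∀ x ∈ α, 0 < x)
    (t : ℕ) (ht : t < α.length)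
    (hbig : (α.take t).sum + (α.drop (t + 1)).sum < α.get ⟨t, ht⟩) :
    SeqUnimodal (fenceRk α) := by
  have hw : FenceUni.s α (t + 1) = FenceUni.s α t + α.get ⟨t, ht⟩ := FenceUni.s_succ α ht
  have hsum : α.sum = FenceUni.s α (t + 1) + (α.drop (t + 1)).sum := by
    rw [show α.sum = (α.take (t + 1)).sum + (α.drop (t + 1)).sum from by
      rw [← List.sum_append, List.take_append_drop]]
    rfl
  have htake : (α.take t).sum = FenceUni.s α t := rfl
  have hbig2 : α.sum + 1 ≤ 2 * FenceUni.wd α t := by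
    unfold FenceUni.wd
    omega
  show ∃ m : ℕ, ∀ i j : ℕ, i ≤ j →
    (j ≤ m → fenceRk α i ≤ fenceRk α j) ∧ (m ≤ i → fenceRk α j ≤ fenceRk α i)
  apply FenceUni.unimodal_of_steps (m := α.sum + 1 - FenceUni.wd α t)
  · intro k hk
    exact FenceUni.step_up_card hpos ht hbig2 hk
  · intro k hk
    exact FenceUni.step_dn_card hpos ht hk
end

section
/- If a finite ranked poset P of rank n admits a top centered chain decomposition (every chain C in the decomposition has center n/2 or (n+1)/2), then the rank sequence r₀,…,r_n of P is top interlacing, i.e., r₀ ≤ r_n ≤ r₁ ≤ r_{n−1} ≤ … ≤ r_{⌈n/2⌉}. -/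
/-- `C` is a saturated chain in the poset `P`: it is nonempty, totally ordered,
and consecutive elements of `C` are covering pairs of `P`. -/
def IsSaturatedChain {P : Type*} [PartialOrder P] (C : Finset P) : Prop :=
  C.Nonempty ∧ (∀ x ∈ C, ∀ y ∈ C, x ≤ y ∨ y ≤ x) ∧
    ∀ x ∈ C, ∀ y ∈ C, x < y → (∀ z ∈ C, ¬(x < z ∧ z < y)) → x ⋖ y

/-- `x` and `y` are the bottom and top elements of the chain `C`. -/
def ChainEnds {P : Type*} [PartialOrder P] (C : Finset P) (x y : P) : Prop :=
  x ∈ C ∧ y ∈ C ∧ (∀ z ∈ C, x ≤ z) ∧ ∀ z ∈ C, z ≤ y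

/-- `𝒞` is a chain decomposition of `P`: a partition of `P` into saturated chains. -/
def IsChainDecomp {P : Type*} [PartialOrder P] (𝒞 : Finset (Finset P)) : Prop :=
  (∀ C ∈ 𝒞, IsSaturatedChain C) ∧
  (∀ C ∈ 𝒞, ∀ D ∈ 𝒞, C ≠ D → Disjoint C D) ∧
  ∀ x : P, ∃ C ∈ 𝒞, x ∈ C

/-- The sequence `a₀,…,a_n` is top interlacing:
`a₀ ≤ a_n ≤ a₁ ≤ a_{n-1} ≤ … ≤ a_{⌈n/2⌉}`. -/
def TopInterlacing (r : ℕ → ℕ) (n : ℕ) : Prop :=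
  (∀ i, 2 * i < n → r i ≤ r (n - i)) ∧ ∀ i, 2 * i + 1 < n → r (n - i) ≤ r (i + 1)

/-- The sequence `a₀,…,a_n` is bottom interlacing:
`a_n ≤ a₀ ≤ a_{n-1} ≤ a₁ ≤ … ≤ a_{⌊n/2⌋}`. -/
def BottomInterlacing (r : ℕ → ℕ) (n : ℕ) : Prop :=
  (∀ i, 2 * i < n → r (n - i) ≤ r i) ∧ ∀ i, 2 * i + 1 < n → r i ≤ r (n - 1 - i)

section Aux

variable {P : Type*} [Finite P] [PartialOrder P]

lemma chain_strictMonoOn (ρ : P → ℕ) (hcov : ∀ x y : P, x ⋖ y → ρ y = ρ x + 1)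
    {C : Finset P} (hC : IsSaturatedChain C) :
    ∀ w ∈ C, ∀ z ∈ C, z < w → ρ z < ρ w := by
  intro w
  induction w using WellFoundedLT.induction with
  | _ w IH =>
    intro hwC z hzC hzw
    classical
    obtain ⟨w', hw'S, hw'max⟩ :=
      (C.filter (· < w)).exists_maximal ⟨z, by simp [hzC, hzw]⟩
    rw [Finset.mem_filter] at hw'S
    obtain ⟨hw'C, hw'w⟩ := hw'S
    have hmaxle : ∀ u ∈ C, u < w → u ≤ w' := by
      intro u huC huw
      rcases hC.2.1 u huC w' hw'C with h | h
      · exact h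
      · rcases eq_or_lt_of_le h with h | h
        · exact h.ge
        · exact absurd h (not_lt_of_ge (hw'max (Finset.mem_filter.mpr ⟨huC, huw⟩) h.le))
    have hcv : w' ⋖ w := by
      refine hC.2.2 w' hw'C w hwC hw'w ?_
      intro u huC ⟨h1, h2⟩
      exact absurd (hmaxle u huC h2) (h1 : w' < u).not_ge
    have hρ : ρ w = ρ w' + 1 := hcov _ _ hcv
    rcases eq_or_lt_of_le (hmaxle z hzC hzw) with he | hlt
    · rw [he]; omega
    · have := IH w' hw'w hw'C z hzC hlt
      omega

lemma chain_succ {C : Finset P} (hC : IsSaturatedChain C) {u y : P}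
    (hu : u ∈ C) (hy : y ∈ C) (huy : u < y) : ∃ m ∈ C, u ⋖ m := by
  classical
  obtain ⟨m, hmS, hmmin⟩ :=
    (C.filter (u < ·)).exists_minimal ⟨y, by simp [hy, huy]⟩
  rw [Finset.mem_filter] at hmS
  obtain ⟨hmC, hum⟩ := hmS
  have hminle : ∀ v ∈ C, u < v → m ≤ v := by
    intro v hvC huv
    rcases hC.2.1 v hvC m hmC with h | h
    · rcases eq_or_lt_of_le h with h | h
      · exact h.ge
      · exact absurd h (not_lt_of_ge (hmmin (Finset.mem_filter.mpr ⟨hvC, huv⟩) h.le))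
    · exact h
  refine ⟨m, hmC, hC.2.2 u hu m hmC hum ?_⟩
  intro v hvC ⟨h1, h2⟩
  exact absurd (hminle v hvC h1) (h2 : v < m).not_ge

lemma ends_exist {C : Finset P} (hC : IsSaturatedChain C) :
    ∃ x y : P, ChainEnds C x y := by
  obtain ⟨x, hxC, hxmin⟩ := C.exists_minimal hC.1
  obtain ⟨y, hyC, hymax⟩ := C.exists_maximal hC.1
  refine ⟨x, y, hxC, hyC, ?_, ?_⟩
  · intro z hzC
    rcases hC.2.1 x hxC z hzC with h | h
    · exact h
    · exact (eq_or_lt_of_le h).elim (fun h => h.ge) (fun h => absurd h (not_lt_of_ge (hxmin hzC h.le)))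
  · intro z hzC
    rcases hC.2.1 z hzC y hyC with h | h
    · exact h
    · exact (eq_or_lt_of_le h).elim (fun h => h.ge) (fun h => absurd h (not_lt_of_ge (hymax hzC h.le)))

lemma chain_range (ρ : P → ℕ) (hcov : ∀ x y : P, x ⋖ y → ρ y = ρ x + 1)
    {C : Finset P} (hC : IsSaturatedChain C) {x y : P} (hE : ChainEnds C x y) :
    ∀ k, ρ x ≤ k → k ≤ ρ y → ∃ u ∈ C, ρ u = k := by
  intro k hk
  induction k, hk using Nat.le_induction with
  | base => intro _; exact ⟨x, hE.1, rfl⟩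
  | succ k hk IH =>
    intro hky
    obtain ⟨u, huC, hu⟩ := IH (by omega)
    have huy : u < y := lt_of_le_of_ne (hE.2.2.2 u huC) (by rintro rfl; omega)
    obtain ⟨m, hmC, hcv⟩ := chain_succ hC huC hE.2.1 huy
    exact ⟨m, hmC, by rw [hcov _ _ hcv, hu]⟩

lemma key_card_le (ρ : P → ℕ) (hcov : ∀ x y : P, x ⋖ y → ρ y = ρ x + 1)
    (𝒞 : Finset (Finset P)) (hCD : IsChainDecomp 𝒞) (j k : ℕ)
    (h : ∀ C ∈ 𝒞, ∀ x y : P, ChainEnds C x y → ρ x ≤ j → j ≤ ρ y → ρ x ≤ k ∧ k ≤ ρ y) :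
    Nat.card {z : P // ρ z = j} ≤ Nat.card {z : P // ρ z = k} := by
  classical
  have hmap : ∀ z : P, ∃ u : P, ρ z = j →
      (∃ C ∈ 𝒞, z ∈ C ∧ u ∈ C) ∧ ρ u = k := by
    intro z
    by_cases hz : ρ z = j
    · obtain ⟨C, hC𝒞, hzC⟩ := hCD.2.2 z
      have hC := hCD.1 C hC𝒞
      obtain ⟨x, y, hE⟩ := ends_exist hC
      have hxz : ρ x ≤ ρ z := by
        rcases eq_or_lt_of_le (hE.2.2.1 z hzC) with he | hlt
        · exact he ▸ le_rfl
        · exact (chain_strictMonoOn ρ hcov hC z hzC x hE.1 hlt).le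
      have hzy : ρ z ≤ ρ y := by
        rcases eq_or_lt_of_le (hE.2.2.2 z hzC) with he | hlt
        · exact he ▸ le_rfl
        · exact (chain_strictMonoOn ρ hcov hC y hE.2.1 z hzC hlt).le
      obtain ⟨hk1, hk2⟩ := h C hC𝒞 x y hE (by omega) (by omega)
      obtain ⟨u, huC, hu⟩ := chain_range ρ hcov hC hE k hk1 hk2
      exact ⟨u, fun _ => ⟨⟨C, hC𝒞, hzC, huC⟩, hu⟩⟩
    · exact ⟨z, fun hzj => absurd hzj hz⟩
  choose f hf using hmap
  have hineq : Set.ncard {z : P | ρ z = j} ≤ Set.ncard {z : P | ρ z = k} := by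
    apply Set.ncard_le_ncard_of_injOn f
    · intro a ha; exact (hf a ha).2
    · intro a ha b hb hab
      obtain ⟨⟨Ca, hCa, haCa, hfa⟩, hka⟩ := hf a ha
      obtain ⟨⟨Cb, hCb, hbCb, hfb⟩, hkb⟩ := hf b hb
      have hCab : Ca = Cb := by
        by_contra hne
        exact Finset.disjoint_left.mp (hCD.2.1 Ca hCa Cb hCb hne) hfa (hab ▸ hfb)
      subst hCab
      have hC := hCD.1 Ca hCa
      simp only [Set.mem_setOf_eq] at ha hb
      rcases hC.2.1 a haCa b hbCb with hle | hle
      · rcases eq_or_lt_of_le hle with he | hlt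
        · exact he
        · have := chain_strictMonoOn ρ hcov hC b hbCb a haCa hlt
          omega
      · rcases eq_or_lt_of_le hle with he | hlt
        · exact he.symm
        · have := chain_strictMonoOn ρ hcov hC a haCa b hbCb hlt
          omega
  exact hineq

end Aux

/-- If a finite ranked poset `P` of rank `n` (with rank function `ρ`) admits a
top centered chain decomposition (every chain has center `n/2` or `(n+1)/2`,
i.e. the ranks of its endpoints sum to `n` or `n+1`), then the rank sequence
of `P` is top interlacing. -/
theorem topInterlacing_of_topCentered_CD {P : Type*} [Finite P] [PartialOrder P]
    (ρ : P → ℕ) (hcov : ∀ x y : P, x ⋖ y → ρ y = ρ x + 1)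
    (hmin : ∀ x : P, IsMin x → ρ x = 0)
    (n : ℕ) (hle : ∀ x, ρ x ≤ n) (hex : ∃ x, ρ x = n)
    (𝒞 : Finset (Finset P)) (hCD : IsChainDecomp 𝒞)
    (hcen : ∀ C ∈ 𝒞, ∀ x y : P, ChainEnds C x y →
      ρ x + ρ y = n ∨ ρ x + ρ y = n + 1) :
    TopInterlacing (fun k => Nat.card {z : P // ρ z = k}) n := by
  constructor
  · intro i hi
    simp only []
    apply key_card_le ρ hcov 𝒞 hCD
    intro C hC x y hE hx hy
    rcases hcen C hC x y hE with hc | hc <;> omega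
  · intro i hi
    simp only []
    apply key_card_le ρ hcov 𝒞 hCD
    intro C hC x y hE hx hy
    rcases hcen C hC x y hE with hc | hc <;> omega
end

section
/- If a finite ranked poset P of rank n admits a bottom centered chain decomposition (every chain C in the decomposition has center n/2 or (n−1)/2), then the rank sequence r₀,…,r_n of P is bottom interlacing, i.e., r_n ≤ r₀ ≤ r_{n−1} ≤ r₁ ≤ … ≤ r_{⌊n/2⌋}. -/
section Aux

variable {P : Type*} [PartialOrder P]

lemma chain_exists_ends {C : Finset P} (hC : IsSaturatedChain C) :
    ∃ x y, ChainEnds C x y := by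
  obtain ⟨hne, htot, -⟩ := hC
  obtain ⟨x, hx, hxmin⟩ := C.exists_minimal hne
  obtain ⟨y, hy, hymax⟩ := C.exists_maximal hne
  refine ⟨x, y, hx, hy, ?_, ?_⟩
  · intro z hz
    rcases htot x hx z hz with h | h
    · exact h
    · rcases h.lt_or_eq with h | h
      · exact absurd h (fun h' => lt_irrefl _ (lt_of_lt_of_le h' (hxmin hz h'.le)))
      · exact h.symm.le
  · intro z hz
    rcases htot z hz y hy with h | h
    · exact h
    · rcases h.lt_or_eq with h | h
      · exact absurd h (fun h' => lt_irrefl _ (lt_of_lt_of_le h' (hymax hz h'.le)))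
      · exact h.symm.le

lemma chain_rho_lt (ρ : P → ℕ) (hcov : ∀ x y : P, x ⋖ y → ρ y = ρ x + 1)
    {C : Finset P} (hC : IsSaturatedChain C) :
    ∀ z ∈ C, ∀ w ∈ C, z < w → ρ z < ρ w := by
  classical
  suffices h : ∀ m : ℕ, ∀ z ∈ C, ∀ w ∈ C, z < w →
      (C.filter (fun t => z < t ∧ t < w)).card ≤ m → ρ z < ρ w by
    intro z hz w hw hzw
    exact h _ z hz w hw hzw le_rfl
  intro m
  induction m with
  | zero =>
    intro z hz w hw hzw hcard
    have hE : ∀ t ∈ C, ¬(z < t ∧ t < w) := by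
      intro t ht htc
      have h1 : t ∈ C.filter (fun t => z < t ∧ t < w) := Finset.mem_filter.mpr ⟨ht, htc⟩
      have h2 : C.filter (fun t => z < t ∧ t < w) = ∅ :=
        Finset.card_eq_zero.mp (Nat.le_zero.mp hcard)
      simp [h2] at h1
    have := hcov _ _ (hC.2.2 z hz w hw hzw hE)
    omega
  | succ m ih =>
    intro z hz w hw hzw hcard
    by_cases hE : ∀ t ∈ C, ¬(z < t ∧ t < w)
    · have := hcov _ _ (hC.2.2 z hz w hw hzw hE)
      omega
    · push_neg at hE
      obtain ⟨t, ht, h1, h2⟩ := hE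
      have key : ∀ a b : P, a < b → t ∈ C.filter (fun s => z < s ∧ s < w) →
          t ∉ C.filter (fun s => a < s ∧ s < b) →
          (C.filter (fun s => a < s ∧ s < b)) ⊆ C.filter (fun s => z < s ∧ s < w) →
          (C.filter (fun s => a < s ∧ s < b)).card ≤ m := by
        intro a b _ htmem htnot hsub
        have hss : (C.filter (fun s => a < s ∧ s < b)) ⊂ C.filter (fun s => z < s ∧ s < w) :=
          ⟨hsub, fun hcon => htnot (hcon htmem)⟩
        have := Finset.card_lt_card hss
        omega
      have htmem : t ∈ C.filter (fun s => z < s ∧ s < w) := Finset.mem_filter.mpr ⟨ht, h1, h2⟩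
      have hA : (C.filter (fun s => z < s ∧ s < t)).card ≤ m := by
        refine key z t h1 htmem ?_ ?_
        · simp [Finset.mem_filter]
        · intro s hs
          simp only [Finset.mem_filter] at hs ⊢
          exact ⟨hs.1, hs.2.1, hs.2.2.trans h2⟩
      have hB : (C.filter (fun s => t < s ∧ s < w)).card ≤ m := by
        refine key t w h2 htmem ?_ ?_
        · simp [Finset.mem_filter]
        · intro s hs
          simp only [Finset.mem_filter] at hs ⊢
          exact ⟨hs.1, h1.trans hs.2.1, hs.2.2⟩
      have := ih z hz t ht h1 hA
      have := ih t ht w hw h2 hB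
      omega

lemma chain_rho_le (ρ : P → ℕ) (hcov : ∀ x y : P, x ⋖ y → ρ y = ρ x + 1)
    {C : Finset P} (hC : IsSaturatedChain C) :
    ∀ z ∈ C, ∀ w ∈ C, z ≤ w → ρ z ≤ ρ w := by
  intro z hz w hw hzw
  rcases hzw.lt_or_eq with h | h
  · exact (chain_rho_lt ρ hcov hC z hz w hw h).le
  · exact h ▸ le_rfl

lemma chain_exists_rank (ρ : P → ℕ) (hcov : ∀ x y : P, x ⋖ y → ρ y = ρ x + 1)
    {C : Finset P} (hC : IsSaturatedChain C) {x y : P} (hxy : ChainEnds C x y)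
    {k : ℕ} (h1 : ρ x ≤ k) (h2 : k ≤ ρ y) : ∃ z ∈ C, ρ z = k := by
  classical
  obtain ⟨hxC, hyC, hxmin, hymax⟩ := hxy
  set S := C.filter (fun t => ρ t ≤ k) with hS
  have hSne : S.Nonempty := ⟨x, Finset.mem_filter.mpr ⟨hxC, h1⟩⟩
  obtain ⟨z, hzS, hzmax⟩ := S.exists_maximal hSne
  have hzC : z ∈ C := (Finset.mem_filter.mp hzS).1
  have hzk : ρ z ≤ k := (Finset.mem_filter.mp hzS).2
  rcases Nat.lt_or_ge (ρ z) k with hlt | hge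
  · exfalso
    have hzy : z < y := by
      rcases (hymax z hzC).lt_or_eq with h | h
      · exact h
      · exact absurd (h ▸ hlt) (by omega)
    set T := C.filter (fun t => z < t) with hT
    have hTne : T.Nonempty := ⟨y, Finset.mem_filter.mpr ⟨hyC, hzy⟩⟩
    obtain ⟨w, hwT, hwmin⟩ := T.exists_minimal hTne
    have hwC : w ∈ C := (Finset.mem_filter.mp hwT).1
    have hzw : z < w := (Finset.mem_filter.mp hwT).2
    have hcovzw : z ⋖ w := by
      refine hC.2.2 z hzC w hwC hzw ?_
      intro t ht ⟨hta, htb⟩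
      exact lt_irrefl _ (lt_of_lt_of_le htb (hwmin (Finset.mem_filter.mpr ⟨ht, hta⟩) htb.le))
    have hρw : ρ w = ρ z + 1 := hcov _ _ hcovzw
    have hwS : w ∈ S := Finset.mem_filter.mpr ⟨hwC, by omega⟩
    exact lt_irrefl _ (lt_of_lt_of_le hzw (hzmax hwS hzw.le))
  · exact ⟨z, hzC, le_antisymm hzk hge⟩

lemma chain_filter_card [DecidableEq P] (ρ : P → ℕ)
    (hcov : ∀ x y : P, x ⋖ y → ρ y = ρ x + 1)
    {C : Finset P} (hC : IsSaturatedChain C) {x y : P} (hxy : ChainEnds C x y) (k : ℕ) :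
    (C.filter (fun z => ρ z = k)).card = if ρ x ≤ k ∧ k ≤ ρ y then 1 else 0 := by
  classical
  split
  · next h =>
    obtain ⟨z, hzC, hzk⟩ := chain_exists_rank ρ hcov hC hxy h.1 h.2
    rw [Finset.card_eq_one]
    refine ⟨z, ?_⟩
    apply Finset.eq_singleton_iff_unique_mem.mpr
    refine ⟨Finset.mem_filter.mpr ⟨hzC, hzk⟩, ?_⟩
    intro w hw
    obtain ⟨hwC, hwk⟩ := Finset.mem_filter.mp hw
    rcases hC.2.1 w hwC z hzC with hle | hle
    · rcases hle.lt_or_eq with hlt | heq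
      · exact absurd (chain_rho_lt ρ hcov hC w hwC z hzC hlt) (by omega)
      · exact heq
    · rcases hle.lt_or_eq with hlt | heq
      · exact absurd (chain_rho_lt ρ hcov hC z hzC w hwC hlt) (by omega)
      · exact heq.symm
  · next h =>
    rw [Finset.card_eq_zero, Finset.filter_eq_empty_iff]
    intro z hzC hzk
    have h1 := chain_rho_le ρ hcov hC x hxy.1 z hzC (hxy.2.2.1 z hzC)
    have h2 := chain_rho_le ρ hcov hC z hzC y hxy.2.1 (hxy.2.2.2 z hzC)
    exact h (by omega)

end Aux

/-- If a finite ranked poset `P` of rank `n` (with rank function `ρ`) admits a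
bottom centered chain decomposition (every chain has center `n/2` or `(n-1)/2`,
i.e. the ranks of its endpoints sum to `n` or `n-1`), then the rank sequence
of `P` is bottom interlacing. -/
theorem bottomInterlacing_of_bottomCentered_CD {P : Type*} [Finite P] [PartialOrder P]
    (ρ : P → ℕ) (hcov : ∀ x y : P, x ⋖ y → ρ y = ρ x + 1)
    (hmin : ∀ x : P, IsMin x → ρ x = 0)
    (n : ℕ) (hle : ∀ x, ρ x ≤ n) (hex : ∃ x, ρ x = n)
    (𝒞 : Finset (Finset P)) (hCD : IsChainDecomp 𝒞)
    (hcen : ∀ C ∈ 𝒞, ∀ x y : P, ChainEnds C x y →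
      ρ x + ρ y = n ∨ ρ x + ρ y + 1 = n) :
    BottomInterlacing (fun k => Nat.card {z : P // ρ z = k}) n := by
  classical
  have : Fintype P := Fintype.ofFinite P
  obtain ⟨hchains, hdisj, hcover⟩ := hCD
  -- rank counts as sums over chains
  have hr : ∀ k : ℕ, Nat.card {z : P // ρ z = k} =
      ∑ C ∈ 𝒞, (C.filter (fun z => ρ z = k)).card := by
    intro k
    rw [Nat.card_eq_fintype_card, Fintype.card_subtype]
    have hU : Finset.univ.filter (fun z => ρ z = k) =
        𝒞.biUnion (fun C => C.filter (fun z => ρ z = k)) := by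
      ext z
      simp only [Finset.mem_filter, Finset.mem_univ, true_and, Finset.mem_biUnion]
      constructor
      · intro hz
        obtain ⟨C, hC, hzC⟩ := hcover z
        exact ⟨C, hC, hzC, hz⟩
      · rintro ⟨C, -, -, hz⟩
        exact hz
    rw [hU, Finset.card_biUnion]
    intro C hC D hD hCD
    exact Finset.disjoint_filter_filter (hdisj C hC D hD hCD)
  -- per-chain comparison
  have key : ∀ (j k : ℕ),
      (∀ a b : ℕ, (a + b = n ∨ a + b + 1 = n) → a ≤ j → j ≤ b → a ≤ k ∧ k ≤ b) →
      Nat.card {z : P // ρ z = j} ≤ Nat.card {z : P // ρ z = k} := by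
    intro j k harith
    rw [hr j, hr k]
    apply Finset.sum_le_sum
    intro C hC
    obtain ⟨x, y, hxy⟩ := chain_exists_ends (hchains C hC)
    rw [chain_filter_card ρ hcov (hchains C hC) hxy j,
        chain_filter_card ρ hcov (hchains C hC) hxy k]
    have hc := hcen C hC x y hxy
    split
    · next h =>
      have := harith (ρ x) (ρ y) hc h.1 h.2
      simp [this.1, this.2]
    · next h => simp
  constructor
  · intro i hi
    simp only
    apply key
    intro a b hab h1 h2
    omega
  · intro i hi
    simp only
    apply key
    intro a b hab h1 h2
    omega
end

section
/- For α = (a, b) a composition with two parts, the lattice L(α) of lower order ideals of the fence F(a,b) is isomorphic to (C_{a} × C_{b}) ⊕ {1̂}, the ordinal sum of the product of a chain with a+1 elements and a chain with b+1 elements with a single top element adjoined. -/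
open Polynomial

lemma fenceLe_iff (a b p q : ℕ) :
    fenceLe [a, b] p q ↔ p = q ∨ (p ≤ q ∧ q ≤ a) ∨ (a ≤ q ∧ q ≤ p ∧ p ≤ a + b) := by
  unfold fenceLe
  constructor
  · rintro (rfl | ⟨j, hj, h⟩)
    · left; rfl
    · right
      simp only [List.length_cons, List.length_nil] at hj
      interval_cases j <;> simp_all
  · rintro (rfl | h | h)
    · left; rfl
    · right; exact ⟨0, by norm_num, by simpa using ⟨h.1, h.2⟩⟩
    · right; exact ⟨1, by norm_num, by simpa using h⟩

def pairIdeal (a b : ℕ) (x : Fin (a + 1) × Fin (b + 1)) : Finset (Fin (a + b + 1)) :=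
  Finset.univ.filter (fun p => (p : ℕ) < (x.1 : ℕ) ∨ a + b < (p : ℕ) + (x.2 : ℕ))

lemma mem_pairIdeal (a b : ℕ) (x : Fin (a + 1) × Fin (b + 1)) (p : Fin (a + b + 1)) :
    p ∈ pairIdeal a b x ↔ (p : ℕ) < (x.1 : ℕ) ∨ a + b < (p : ℕ) + (x.2 : ℕ) := by
  simp [pairIdeal]

def idealOf (a b : ℕ) : WithTop (Fin (a + 1) × Fin (b + 1)) → Finset (Fin (a + b + 1))
  | ⊤ => Finset.univ
  | (x : Fin (a + 1) × Fin (b + 1)) => pairIdeal a b x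

lemma idealOf_isIdeal (a b : ℕ) (x : WithTop (Fin (a + 1) × Fin (b + 1))) :
    IsFenceIdeal [a, b] (idealOf a b x) := by
  cases x with
  | top => intro p q _ _; exact Finset.mem_univ p
  | coe x =>
    intro p q hle hq
    rw [show ((idealOf a b (x : WithTop (Fin (a+1) × Fin (b+1)))) :
          Finset (Fin (([a,b] : List ℕ).sum + 1))) = pairIdeal a b x from rfl] at hq ⊢
    refine (mem_pairIdeal a b x p).mpr ?_
    replace hq := (mem_pairIdeal a b x q).mp hq
    have hi : (x.1 : ℕ) ≤ a := Nat.lt_succ_iff.mp x.1.isLt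
    have hj : (x.2 : ℕ) ≤ b := Nat.lt_succ_iff.mp x.2.isLt
    rw [fenceLe_iff] at hle
    have hp : (p : ℕ) ≤ a + b := Nat.lt_succ_iff.mp p.isLt
    have hq' : (q : ℕ) ≤ a + b := Nat.lt_succ_iff.mp q.isLt
    rcases hle with h | h | h
    · have : (p : ℕ) = (q : ℕ) := by rw [h]
      omega
    · omega
    · omega

lemma idealOf_subset_iff (a b : ℕ) (ha : 0 < a) (hb : 0 < b)
    (x y : WithTop (Fin (a + 1) × Fin (b + 1))) :
    idealOf a b x ⊆ idealOf a b y ↔ x ≤ y := by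
  cases x with
  | top =>
    cases y with
    | top => simp [idealOf]
    | coe y =>
      simp only [idealOf]
      constructor
      · intro h
        have hm := h (Finset.mem_univ (⟨a, by omega⟩ : Fin (a + b + 1)))
        rw [mem_pairIdeal] at hm
        have hm2 : a < (y.1 : ℕ) ∨ a + b < a + (y.2 : ℕ) := hm
        have hi : (y.1 : ℕ) ≤ a := Nat.lt_succ_iff.mp y.1.isLt
        have hj : (y.2 : ℕ) ≤ b := Nat.lt_succ_iff.mp y.2.isLt
        omega
      · intro h; exact absurd h (by simp)
  | coe x =>
    cases y with
    | top => simp [idealOf, le_top]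
    | coe y =>
      simp only [idealOf, WithTop.coe_le_coe]
      have hi : (x.1 : ℕ) ≤ a := Nat.lt_succ_iff.mp x.1.isLt
      have hj : (x.2 : ℕ) ≤ b := Nat.lt_succ_iff.mp x.2.isLt
      have hi' : (y.1 : ℕ) ≤ a := Nat.lt_succ_iff.mp y.1.isLt
      have hj' : (y.2 : ℕ) ≤ b := Nat.lt_succ_iff.mp y.2.isLt
      constructor
      · intro h
        rw [Prod.le_def, Fin.le_def, Fin.le_def]
        constructor
        · by_contra hlt
          push_neg at hlt
          have hm : (⟨(y.1 : ℕ), by omega⟩ : Fin (a + b + 1)) ∈ pairIdeal a b x := by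
            rw [mem_pairIdeal]; left; exact hlt
          have hm2 := h hm
          rw [mem_pairIdeal] at hm2
          have hm3 : (y.1 : ℕ) < (y.1 : ℕ) ∨ a + b < (y.1 : ℕ) + (y.2 : ℕ) := hm2
          omega
        · by_contra hlt
          push_neg at hlt
          have hm : (⟨a + b + 1 - (x.2 : ℕ), by omega⟩ : Fin (a + b + 1)) ∈ pairIdeal a b x := by
            rw [mem_pairIdeal]; right
            show a + b < a + b + 1 - (x.2 : ℕ) + (x.2 : ℕ)
            omega
          have hm2 := h hm
          rw [mem_pairIdeal] at hm2
          have hm3 : a + b + 1 - (x.2 : ℕ) < (y.1 : ℕ) ∨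
              a + b < a + b + 1 - (x.2 : ℕ) + (y.2 : ℕ) := hm2
          omega
      · intro h p hp
        rw [mem_pairIdeal] at hp ⊢
        have h1 : (x.1 : ℕ) ≤ (y.1 : ℕ) := h.1
        have h2 : (x.2 : ℕ) ≤ (y.2 : ℕ) := h.2
        omega

lemma idealOf_surj (a b : ℕ) (ha : 0 < a) (hb : 0 < b)
    (I : Finset (Fin (a + b + 1))) (hI : IsFenceIdeal [a, b] I) :
    ∃ x, idealOf a b x = I := by
  classical
  by_cases htop : (⟨a, by omega⟩ : Fin (a + b + 1)) ∈ I
  · refine ⟨⊤, ?_⟩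
    simp only [idealOf]
    symm
    rw [Finset.eq_univ_iff_forall]
    intro p
    have hp : (p : ℕ) ≤ a + b := Nat.lt_succ_iff.mp p.isLt
    refine hI p ⟨a, by change a < a + b + 1; omega⟩ ?_ htop
    rw [fenceLe_iff]
    rcases le_or_gt (p : ℕ) a with h | h
    · right; left; exact ⟨h, le_refl a⟩
    · right; right
      show a ≤ a ∧ a ≤ (p : ℕ) ∧ (p : ℕ) ≤ a + b
      omega
  · have hPi : ∃ k, k = a ∨ ∃ h : k < a + b + 1, (⟨k, h⟩ : Fin (a + b + 1)) ∉ I ∧ k < a :=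
      ⟨a, Or.inl rfl⟩
    have hPj : ∃ k, k = b ∨
        ∃ h : a + b - k < a + b + 1, (⟨a + b - k, h⟩ : Fin (a + b + 1)) ∉ I ∧ k < b :=
      ⟨b, Or.inl rfl⟩
    set i := Nat.find hPi with hidef
    set j := Nat.find hPj with hjdef
    have hispec := Nat.find_spec hPi
    have hjspec := Nat.find_spec hPj
    have hile : i ≤ a := Nat.find_le (Or.inl rfl)
    have hjle : j ≤ b := Nat.find_le (Or.inl rfl)
    -- left characterization
    have hleft : ∀ p : Fin (a + b + 1), (p : ℕ) < a → (p ∈ I ↔ (p : ℕ) < i) := by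
      intro p hp
      constructor
      · intro hmem
        by_contra hge
        push_neg at hge
        rcases hispec with h | ⟨h, hni, hia⟩
        · omega
        · refine hni (hI ⟨i, h⟩ p ?_ hmem)
          rw [fenceLe_iff]
          right; left
          exact ⟨hge, by omega⟩
      · intro hlt
        have hmin := Nat.find_min hPi hlt
        push_neg at hmin
        by_contra hpI
        have := hmin.2 p.isLt (by simpa using hpI)
        omega
    -- right characterization
    have hright : ∀ p : Fin (a + b + 1), a < (p : ℕ) →
        (p ∈ I ↔ a + b < (p : ℕ) + j) := by
      intro p hp
      have hple : (p : ℕ) ≤ a + b := Nat.lt_succ_iff.mp p.isLt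
      constructor
      · intro hmem
        by_contra hge
        push_neg at hge
        -- j ≤ a + b - p, so a+b-j ≥ p
        rcases hjspec with h | ⟨h, hni, hjb⟩
        · omega
        · refine hni (hI ⟨a + b - j, h⟩ p ?_ hmem)
          rw [fenceLe_iff]
          right; right
          show a ≤ (p : ℕ) ∧ (p : ℕ) ≤ a + b - j ∧ a + b - j ≤ a + b
          omega
      · intro hlt
        set k := a + b - (p : ℕ) with hk
        have hkj : k < j := by omega
        have hmin := Nat.find_min hPj hkj
        push_neg at hmin
        by_contra hpI
        have hpeq : (⟨a + b - k, by omega⟩ : Fin (a + b + 1)) = p := by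
          apply Fin.ext; show a + b - k = (p : ℕ); omega
        have := hmin.2 (by omega) (by rw [hpeq]; exact hpI)
        omega
    refine ⟨((⟨i, by omega⟩, ⟨j, by omega⟩) : Fin (a + 1) × Fin (b + 1)), ?_⟩
    simp only [idealOf]
    ext p
    rw [mem_pairIdeal]
    have hple : (p : ℕ) ≤ a + b := Nat.lt_succ_iff.mp p.isLt
    have key : p ∈ I ↔ (p : ℕ) < i ∨ a + b < (p : ℕ) + j := by
      rcases lt_trichotomy (p : ℕ) a with h | h | h
      · rw [hleft p h]; omega
      · have hpa : p = ⟨a, by omega⟩ := Fin.ext h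
        rw [hpa]
        simp only [htop, false_iff]
        push_neg
        constructor <;> omega
      · rw [hright p h]; omega
    exact key.symm

/-- For a two-part composition `α = (a,b)`, the lattice `L(α)` of lower order
ideals of the fence `F(a,b)` is isomorphic to the ordinal sum
`(C_a × C_b) ⊕ {1̂}`, where `C_a` and `C_b` are chains with `a+1` and `b+1`
elements; adjoining a new top element is `WithTop`. -/
theorem fence_two_segments_iso (a b : ℕ) (ha : 0 < a) (hb : 0 < b) :
    Nonempty ({I : Finset (Fin (([a, b] : List ℕ).sum + 1)) // IsFenceIdeal [a, b] I} ≃o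
      WithTop (Fin (a + 1) × Fin (b + 1))) := by
  have hmono : ∀ x y : WithTop (Fin (a + 1) × Fin (b + 1)),
      idealOf a b x ⊆ idealOf a b y ↔ x ≤ y := idealOf_subset_iff a b ha hb
  have hinj : Function.Injective (fun x => (⟨idealOf a b x, idealOf_isIdeal a b x⟩ :
      {I : Finset (Fin (([a, b] : List ℕ).sum + 1)) // IsFenceIdeal [a, b] I})) := by
    intro x y hxy
    have h1 : idealOf a b x = idealOf a b y := congrArg Subtype.val hxy
    exact le_antisymm ((hmono x y).mp h1.le) ((hmono y x).mp h1.ge)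
  have hsurj : Function.Surjective (fun x => (⟨idealOf a b x, idealOf_isIdeal a b x⟩ :
      {I : Finset (Fin (([a, b] : List ℕ).sum + 1)) // IsFenceIdeal [a, b] I})) := by
    rintro ⟨I, hI⟩
    obtain ⟨x, hx⟩ := idealOf_surj a b ha hb I hI
    exact ⟨x, Subtype.ext hx⟩
  let e := Equiv.ofBijective _ ⟨hinj, hsurj⟩
  refine ⟨(e.toOrderIso ?_ ?_).symm⟩
  · intro x y h
    show idealOf a b x ⊆ idealOf a b y
    exact (hmono x y).mpr h
  · intro u v huv
    have h1 : idealOf a b (e.symm u) = u.val :=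
      congrArg Subtype.val (e.apply_symm_apply u)
    have h2 : idealOf a b (e.symm v) = v.val :=
      congrArg Subtype.val (e.apply_symm_apply v)
    show e.symm u ≤ e.symm v
    refine (hmono _ _).mp ?_
    rw [h1, h2]
    exact huv
end
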